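/- arXiv:2507.12101 — 6 statements merged into one kernel-verified Lean document; each statement's English description precedes it below -/
import Mathlib

section
/- Let n ≥ 2 be an integer and let k, ℓ ∈ ℤⁿ be linearly independent integer vectors. Then for all real numbers a, b, M > 0, the Lebesgue measure of the set {w ∈ ℝⁿ : |w| < M, |w·k| < a, |π_k^⊥w·ℓ| ≤ b} is at most 4 a b (2M)^{n−2}. -/
open MeasureTheory Set ENNReal Metric
open scoped RealInnerProductSpace

noncomputable section

/-- The cast of an integer vector to Euclidean space `ℝⁿ`. -/
def castZ {n : ℕ} (k : Fin n → ℤ) : EuclideanSpace ℝ (Fin n) := WithLp.toLp 2 (fun i => (k i : ℝ))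

/-- `projPerp k w = π_k^⊥ w`, the orthogonal projection of `w` onto the orthogonal
complement of `k`. -/
def projPerp {n : ℕ} (k w : EuclideanSpace ℝ (Fin n)) : EuclideanSpace ℝ (Fin n) :=
  w - (⟪w, k⟫ / ‖k‖ ^ 2) • k

/-- The ℓ¹-norm `|k|₁ = Σᵢ |kᵢ|` of an integer vector. -/
def normOneZ {n : ℕ} (k : Fin n → ℤ) : ℝ := ∑ i, |(k i : ℝ)|

/-- `k ∈ 𝒢ⁿ`: the components of `k` have gcd 1 and the first nonzero component of `k`
is strictly positive. -/
def Gn {n : ℕ} (k : Fin n → ℤ) : Prop :=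
  Finset.univ.gcd k = 1 ∧ ∃ i, 0 < k i ∧ ∀ j, j < i → k j = 0

/-- `k ∈ 𝒢ⁿ_K`. -/
def GnK {n : ℕ} (K : ℝ) (k : Fin n → ℤ) : Prop := Gn k ∧ normOneZ k ≤ K

/-- `l ∈ ℤk`, i.e. `l` is an integer multiple of `k`. -/
def inZk {n : ℕ} (k l : Fin n → ℤ) : Prop := ∃ m : ℤ, l = m • k

/-- For linearly independent integer vectors `k, ℓ ∈ ℤⁿ` (`n ≥ 2`) and reals
`a, b, M > 0`, the Lebesgue measure of
`{w ∈ ℝⁿ : |w| < M, |w·k| < a, |π_k^⊥ w · ℓ| ≤ b}` is at most `4 a b (2M)^(n-2)`. -/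
theorem measure_slab_le (n : ℕ) (hn : 2 ≤ n) (k l : Fin n → ℤ)
    (hkl : LinearIndependent ℝ ![castZ k, castZ l])
    (a b M : ℝ) (ha : 0 < a) (hb : 0 < b) (hM : 0 < M) :
    volume {w : EuclideanSpace ℝ (Fin n) |
        ‖w‖ < M ∧ |⟪w, castZ k⟫| < a ∧ |⟪projPerp (castZ k) w, castZ l⟫| ≤ b} ≤
      ENNReal.ofReal (4 * a * b * (2 * M) ^ (n - 2)) := by
  classical
  haveI : NeZero n := ⟨by omega⟩
  set K : EuclideanSpace ℝ (Fin n) := castZ k with hKdef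
  set L : EuclideanSpace ℝ (Fin n) := castZ l with hLdef
  have hK0 : K ≠ 0 := by simpa using hkl.ne_zero 0
  have hL0 : L ≠ 0 := by simpa using hkl.ne_zero 1
  have hKn : (0:ℝ) < ‖K‖ := norm_pos_iff.mpr hK0
  have hK2 : ‖K‖ ^ 2 ≠ 0 := pow_ne_zero _ hKn.ne'
  set P : EuclideanSpace ℝ (Fin n) := projPerp K L with hPdef
  have hP0 : P ≠ 0 := by
    intro h
    have hL' : L = (⟪L, K⟫ / ‖K‖ ^ 2) • K := by
      have h' : L - (⟪L, K⟫ / ‖K‖ ^ 2) • K = 0 := h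
      exact sub_eq_zero.mp h'
    rw [linearIndependent_fin2] at hkl
    obtain ⟨hL0', hni⟩ := hkl
    simp only [Matrix.cons_val_one, Matrix.head_cons, Matrix.cons_val_zero] at hL0' hni
    set c : ℝ := ⟪L, K⟫ / ‖K‖ ^ 2 with hcdef
    have hc : c ≠ 0 := fun hc => hL0 (by rw [hL', hc, zero_smul])
    exact hni c⁻¹ (by rw [hL', smul_smul, inv_mul_cancel₀ hc, one_smul])
  have hPn : (0:ℝ) < ‖P‖ := norm_pos_iff.mpr hP0
  have hKPorth : ⟪K, P⟫ = 0 := by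
    rw [hPdef, projPerp, inner_sub_right, real_inner_smul_right,
      real_inner_comm K L]
    rw [real_inner_self_eq_norm_sq K]
    field_simp
    ring
  have hGram : ‖K‖ ^ 2 * ‖P‖ ^ 2 = ‖K‖ ^ 2 * ‖L‖ ^ 2 - ⟪K, L⟫ ^ 2 := by
    have h1 : ‖P‖ ^ 2 = ⟪P, P⟫ := (real_inner_self_eq_norm_sq P).symm
    rw [h1, hPdef, projPerp, inner_sub_left, inner_sub_right, inner_sub_right,
      real_inner_smul_left, real_inner_smul_right, real_inner_smul_right,
      real_inner_smul_left, real_inner_self_eq_norm_sq K,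
      real_inner_self_eq_norm_sq L, real_inner_comm L K]
    field_simp
    ring
  have hKL2 : (1:ℝ) ≤ ‖K‖ ^ 2 * ‖L‖ ^ 2 - ⟪K, L⟫ ^ 2 := by
    set D : ℤ := (∑ i, k i ^ 2) * (∑ i, l i ^ 2) - (∑ i, k i * l i) ^ 2 with hD
    have hcast : (D : ℝ) = ‖K‖ ^ 2 * ‖L‖ ^ 2 - ⟪K, L⟫ ^ 2 := by
      have e1 : ‖K‖ ^ 2 = ∑ i, (k i : ℝ) ^ 2 := by
        rw [← real_inner_self_eq_norm_sq]
        simp only [hKdef, castZ, PiLp.inner_apply]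
        simp [RCLike.inner_apply, sq]
      have e2 : ‖L‖ ^ 2 = ∑ i, (l i : ℝ) ^ 2 := by
        rw [← real_inner_self_eq_norm_sq]
        simp only [hLdef, castZ, PiLp.inner_apply]
        simp [RCLike.inner_apply, sq]
      have e3 : ⟪K, L⟫ = ∑ i, (k i : ℝ) * (l i : ℝ) := by
        simp [hKdef, hLdef, castZ, PiLp.inner_apply, RCLike.inner_apply]
        exact Finset.sum_congr rfl fun i _ => mul_comm _ _
      rw [e1, e2, e3, hD]
      push_cast
      ring
    have hpos : (0:ℝ) < (D : ℝ) := by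
      rw [hcast, ← hGram]; positivity
    have hD1 : (1:ℤ) ≤ D := by
      have : (0:ℤ) < D := by exact_mod_cast hpos
      omega
    calc (1:ℝ) ≤ (D:ℝ) := by exact_mod_cast hD1
      _ = _ := hcast
  have hKP1 : (1:ℝ) ≤ ‖K‖ * ‖P‖ := by
    nlinarith [hGram, norm_nonneg K, norm_nonneg P, hKL2,
      mul_nonneg (norm_nonneg K) (norm_nonneg P), sq_nonneg (‖K‖ * ‖P‖ - 1),
      sq_nonneg (‖K‖ * ‖P‖ + 1)]
  have h01 : (0 : Fin n) ≠ 1 := by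
    intro h
    have := congrArg Fin.val h
    simp [Fin.val_one', Nat.mod_eq_of_lt (show 1 < n by omega)] at this
  set u : Fin n → EuclideanSpace ℝ (Fin n) :=
    fun i => if i = 0 then ‖K‖⁻¹ • K else ‖P‖⁻¹ • P with hu
  have hcard : Module.finrank ℝ (EuclideanSpace ℝ (Fin n)) = Fintype.card (Fin n) := by
    simp
  have norm1 : ∀ x : EuclideanSpace ℝ (Fin n), x ≠ 0 → ⟪‖x‖⁻¹ • x, ‖x‖⁻¹ • x⟫ = 1 := by
    intro x hx
    rw [real_inner_smul_left, real_inner_smul_right, real_inner_self_eq_norm_sq]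
    have hxn : ‖x‖ ≠ 0 := norm_ne_zero_iff.mpr hx
    field_simp
  have hon : Orthonormal ℝ (({0, 1} : Set (Fin n)).restrict u) := by
    rw [orthonormal_iff_ite]
    rintro ⟨i, hi⟩ ⟨j, hj⟩
    change ⟪u i, u j⟫ = _
    simp only [Set.mem_insert_iff, Set.mem_singleton_iff] at hi hj
    have hPK : ⟪P, K⟫ = 0 := (real_inner_comm P K).symm.trans hKPorth
    have hu0 : u 0 = ‖K‖⁻¹ • K := by simp [hu]
    have hu1 : u 1 = ‖P‖⁻¹ • P := by simp [hu, h01.symm]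
    rcases hi with rfl | rfl <;> rcases hj with rfl | rfl
    · rw [hu0, if_pos rfl]; exact norm1 K hK0
    · rw [hu0, hu1, if_neg (fun h => h01 (congrArg Subtype.val h)),
        real_inner_smul_left, real_inner_smul_right, hKPorth]; ring
    · rw [hu1, hu0, if_neg (fun h => h01 (congrArg Subtype.val h).symm),
        real_inner_smul_left, real_inner_smul_right, hPK]; ring
    · rw [hu1, if_pos rfl]; exact norm1 P hP0
  obtain ⟨B, hB⟩ := hon.exists_orthonormalBasis_extension_of_card_eq hcard
  have hB0 : B 0 = ‖K‖⁻¹ • K := by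
    rw [hB 0 (by simp)]; simp [hu]
  have hB1 : B 1 = ‖P‖⁻¹ • P := by
    rw [hB 1 (by simp)]; simp [hu, h01.symm]
  -- the inner product with the projection
  have hswap : ∀ w : EuclideanSpace ℝ (Fin n), ⟪projPerp K w, L⟫ = ⟪w, P⟫ := by
    intro w
    rw [projPerp, hPdef, projPerp, inner_sub_left, inner_sub_right,
      real_inner_smul_left, real_inner_smul_right, real_inner_comm K L]
    ring
  set c : Fin n → ℝ := fun i => if i = 0 then a / ‖K‖ else if i = 1 then b / ‖P‖ else M
    with hc
  set box : Set (Fin n → ℝ) := Set.pi Set.univ (fun i => Icc (-(c i)) (c i)) with hbox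
  have hbox_meas : MeasurableSet box := MeasurableSet.univ_pi fun i => measurableSet_Icc
  have hφ : MeasurePreserving
      ((MeasurableEquiv.toLp 2 (Fin n → ℝ)).symm ∘ B.repr) volume volume :=
    (EuclideanSpace.volume_preserving_symm_measurableEquiv_toLp (Fin n)).comp B.measurePreserving_repr
  have hsub : {w : EuclideanSpace ℝ (Fin n) |
        ‖w‖ < M ∧ |⟪w, K⟫| < a ∧ |⟪projPerp K w, L⟫| ≤ b} ⊆
      ((MeasurableEquiv.toLp 2 (Fin n → ℝ)).symm ∘ B.repr) ⁻¹' box := by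
    rintro w ⟨hw1, hw2, hw3⟩
    have happ : ∀ i, ((MeasurableEquiv.toLp 2 (Fin n → ℝ)).symm (B.repr w)) i = ⟪B i, w⟫ := by
      intro i
      rw [← B.repr_apply_apply]
      rfl
    intro i _
    rw [Function.comp_apply] at *
    rw [happ i, Set.mem_Icc, ← abs_le]
    rcases eq_or_ne i 0 with rfl | hi0
    · rw [hB0, real_inner_smul_left, real_inner_comm w K]
      rw [hc]
      simp only [if_pos rfl]
      rw [abs_mul, abs_inv, abs_norm, div_eq_inv_mul]
      exact mul_le_mul_of_nonneg_left hw2.le (by positivity)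
    rcases eq_or_ne i 1 with rfl | hi1
    · rw [hB1, real_inner_smul_left, real_inner_comm w P, ← hswap w]
      rw [hc]
      simp only [if_neg h01.symm, if_pos rfl]
      rw [abs_mul, abs_inv, abs_norm, div_eq_inv_mul]
      exact mul_le_mul_of_nonneg_left hw3 (by positivity)
    · rw [hc]
      simp only [if_neg hi0, if_neg hi1]
      calc |⟪B i, w⟫| ≤ ‖B i‖ * ‖w‖ := abs_real_inner_le_norm _ _
        _ = ‖w‖ := by rw [B.orthonormal.1 i]; ring
        _ ≤ M := hw1.le
  have hc_nonneg : ∀ i, 0 ≤ c i := by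
    intro i
    rw [hc]
    dsimp only
    split_ifs <;> positivity
  calc volume {w : EuclideanSpace ℝ (Fin n) |
        ‖w‖ < M ∧ |⟪w, K⟫| < a ∧ |⟪projPerp K w, L⟫| ≤ b}
      ≤ volume (((MeasurableEquiv.toLp 2 (Fin n → ℝ)).symm ∘ B.repr) ⁻¹' box) :=
        measure_mono hsub
    _ = volume box := hφ.measure_preimage hbox_meas.nullMeasurableSet
    _ = ∏ i, volume (Icc (-(c i)) (c i)) := volume_pi_pi _
    _ = ∏ i, ENNReal.ofReal (2 * c i) := by
        refine Finset.prod_congr rfl fun i _ => ?_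
        rw [Real.volume_Icc]
        ring_nf
    _ = ENNReal.ofReal (∏ i, 2 * c i) := by
        rw [ENNReal.ofReal_prod_of_nonneg]
        intro i _
        have := hc_nonneg i
        positivity
    _ ≤ ENNReal.ofReal (4 * a * b * (2 * M) ^ (n - 2)) := by
        apply ENNReal.ofReal_le_ofReal
        have hmem1 : (1 : Fin n) ∈ Finset.univ.erase (0 : Fin n) := by
          simp [h01.symm]
        have hsplit : ∏ i, (2 * c i) =
            (2 * c 0) * ((2 * c 1) * ∏ i ∈ (Finset.univ.erase 0).erase 1, (2 * c i)) := by
          rw [← Finset.mul_prod_erase _ _ (Finset.mem_univ (0 : Fin n)), ← Finset.mul_prod_erase _ _ hmem1]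
        have hrest : ∏ i ∈ (Finset.univ.erase (0 : Fin n)).erase 1, (2 * c i)
            = (2 * M) ^ (n - 2) := by
          rw [Finset.prod_congr rfl (fun i hi => ?_), Finset.prod_const]
          · congr 1
            rw [Finset.card_erase_of_mem hmem1, Finset.card_erase_of_mem (Finset.mem_univ 0)]
            simp only [Finset.card_univ, Fintype.card_fin]
            omega
          · simp only [Finset.mem_erase] at hi
            rw [hc]
            simp [hi.1, hi.2.1]
        rw [hsplit, hrest]
        have hc0 : c 0 = a / ‖K‖ := by rw [hc]; simp
        have hc1 : c 1 = b / ‖P‖ := by rw [hc]; simp [h01.symm]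
        rw [hc0, hc1]
        have key : 2 * (a / ‖K‖) * (2 * (b / ‖P‖)) ≤ 4 * a * b := by
          have h1 : 2 * (a / ‖K‖) * (2 * (b / ‖P‖)) = 4 * a * b / (‖K‖ * ‖P‖) := by
            field_simp; ring
          rw [h1]
          calc 4 * a * b / (‖K‖ * ‖P‖) ≤ 4 * a * b / 1 := by
                apply div_le_div_of_nonneg_left (by positivity) (by norm_num) hKP1
            _ = 4 * a * b := by ring
        calc 2 * (a / ‖K‖) * (2 * (b / ‖P‖) * (2 * M) ^ (n - 2))
            = (2 * (a / ‖K‖) * (2 * (b / ‖P‖))) * (2 * M) ^ (n - 2) := by ring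
          _ ≤ 4 * a * b * (2 * M) ^ (n - 2) := by
              apply mul_le_mul_of_nonneg_right key (by positivity)
end
end

section
/- Let n ≥ 2 be an integer, γ, L, r > 0, and k ∈ ℤⁿ \ {0}. Let B̌ ⊂ ℝⁿ be a bounded convex open nonempty set and, for ρ > 0, write B̌^ρ := {v ∈ ℝⁿ : dist(v, B̌) < ρ}. Set řₖ := r/(n|k|_∞), t̃ₖ := min{1, γ|k|/(2L)}, 𝔯ₖ := t̃ₖ·r/(8 n^{3/2} |k|), and ϖ₀ := √n·L·|k|·𝔯ₖ. Let h₀ : B̌^{2řₖ} → ℝ be continuously differentiable and satisfy: (a) |∂₁h₀(v) − ∂₁h₀(v')| ≤ L|k|·|v − v'| for all v, v' ∈ B̌^{2řₖ}; (b) ∂₁h₀(t, v̂) − ∂₁h₀(t', v̂) ≥ γ|k|²(t − t') whenever (t, v̂), (t', v̂) ∈ B̌^{2řₖ} and t > t'. Define Z := {v ∈ B̌^{(5/4)řₖ} : ∂₁h₀(v) = 0} and, for ϖ ∈ ℝ, Z_ϖ := {v ∈ B̌^{řₖ} : ∂₁h₀(v) = ϖ}. For j ∈ ℤ^{n−1}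 let Q_j := 𝔯ₖ·(j + [0,1)^{n−1}) ⊂ ℝ^{n−1}, let J := {j ∈ ℤ^{n−1} : there exists (t, v̂) ∈ Z with v̂ ∈ Q_j}, and Q := ⋃_{j ∈ J} Q_j. Then there exists a function η : [−ϖ₀, ϖ₀] × Q → ℝ such that: (i) for every (ϖ, v̂) ∈ [−ϖ₀, ϖ₀] × Q the point (η(ϖ, v̂), v̂) belongs to B̌^{(3/2)řₖ} and ∂₁h₀(η(ϖ, v̂), v̂) = ϖ; (ii) for every ϖ with |ϖ| ≤ ϖ₀ one has Z_ϖ ⊆ {(η(ϖ, v̂), v̂) : v̂ ∈ Q}; (iii) |η(ϖ, v̂) − η(ϖ', v̂)| ≤ |ϖ − ϖ'|/(γ|k|²) for all ϖ, ϖ' ∈ [−ϖ₀, ϖ₀] and v̂ ∈ Q. -/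
open MeasureTheory Set ENNReal Metric
open scoped RealInnerProductSpace

noncomputable section

/-- The max-norm `|k|_∞` of an integer vector, as a real number. -/
def normInfZ {n : ℕ} (k : Fin n → ℤ) : ℝ :=
  ((Finset.univ.sup fun i => (k i).natAbs : ℕ) : ℝ)

/-- The point `(t, v̂) ∈ ℝ^(m+1)` with first coordinate `t` and remaining coordinates `v̂`. -/
def mkE {m : ℕ} (t : ℝ) (vh : EuclideanSpace ℝ (Fin m)) : EuclideanSpace ℝ (Fin (m + 1)) :=
  WithLp.toLp 2 (fun i => (Fin.cons t (fun j => vh j) : Fin (m + 1) → ℝ) i)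

/-- The last `m` coordinates `v̂` of a point `v ∈ ℝ^(m+1)`. -/
def tailE {m : ℕ} (v : EuclideanSpace ℝ (Fin (m + 1))) : EuclideanSpace ℝ (Fin m) :=
  WithLp.toLp 2 (fun j : Fin m => v j.succ)

/-- The partial derivative `∂₁ h₀` with respect to the first coordinate. -/
def D1 {m : ℕ} (h0 : EuclideanSpace ℝ (Fin (m + 1)) → ℝ)
    (v : EuclideanSpace ℝ (Fin (m + 1))) : ℝ :=
  deriv (fun t => h0 (mkE t (tailE v))) (v 0)

/-- The half-open cube `Q_j = 𝔯ₖ (j + [0,1)^m)` of edge `𝔯ₖ` and lower left corner `𝔯ₖ j`. -/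
def Qcube {m : ℕ} (frk : ℝ) (j : Fin m → ℤ) : Set (EuclideanSpace ℝ (Fin m)) :=
  {vh | ∀ i, frk * j i ≤ vh i ∧ vh i < frk * (j i + 1)}

/-- The zero set `Z := {v ∈ B̌^{(5/4)řₖ} : ∂₁h₀(v) = 0}`. -/
def Zset {m : ℕ} (h0 : EuclideanSpace ℝ (Fin (m + 1)) → ℝ)
    (B : Set (EuclideanSpace ℝ (Fin (m + 1)))) (rk : ℝ) :
    Set (EuclideanSpace ℝ (Fin (m + 1))) :=
  {v ∈ Metric.thickening ((5 / 4) * rk) B | D1 h0 v = 0}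

/-- The index set `J` of cubes meeting the projection of `Z`. -/
def Jset {m : ℕ} (h0 : EuclideanSpace ℝ (Fin (m + 1)) → ℝ)
    (B : Set (EuclideanSpace ℝ (Fin (m + 1)))) (rk frk : ℝ) : Set (Fin m → ℤ) :=
  {j | ∃ v ∈ Zset h0 B rk, tailE v ∈ Qcube frk j}

/-- The set `Q := ⋃_{j ∈ J} Q_j`. -/
def Qset {m : ℕ} (h0 : EuclideanSpace ℝ (Fin (m + 1)) → ℝ)
    (B : Set (EuclideanSpace ℝ (Fin (m + 1)))) (rk frk : ℝ) :
    Set (EuclideanSpace ℝ (Fin m)) :=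
  ⋃ j ∈ Jset h0 B rk frk, Qcube frk j

set_option maxHeartbeats 1000000

/-- Auxiliary: the tail of `mkE t vh` is `vh`. -/
lemma tailE_mkE {m : ℕ} (t : ℝ) (vh : EuclideanSpace ℝ (Fin m)) : tailE (mkE t vh) = vh := by
  ext j; simp [tailE, mkE]

/-- Auxiliary: reconstruct a point from its first coordinate and tail. -/
lemma mkE_eta {m : ℕ} (v : EuclideanSpace ℝ (Fin (m + 1))) : mkE (v 0) (tailE v) = v := by
  ext i
  refine Fin.cases ?_ ?_ i
  · rfl
  · intro j; simp [mkE, tailE]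

/-- Auxiliary: subtraction of `mkE` points. -/
lemma mkE_sub {m : ℕ} (t t' : ℝ) (v v' : EuclideanSpace ℝ (Fin m)) :
    mkE t v - mkE t' v' = mkE (t - t') (v - v') := by
  ext i
  refine Fin.cases ?_ ?_ i
  · simp [mkE]
  · intro j; simp [mkE]

/-- Auxiliary: squared Euclidean norm as a sum of squares. -/
lemma norm_sq_euclid {n : ℕ} (x : EuclideanSpace ℝ (Fin n)) : ‖x‖ ^ 2 = ∑ i, (x i) ^ 2 := by
  rw [EuclideanSpace.norm_eq, Real.sq_sqrt (by positivity)]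
  simp [Real.norm_eq_abs, sq_abs]

/-- Auxiliary: coordinates are bounded by the norm. -/
lemma abs_apply_le_norm {n : ℕ} (x : EuclideanSpace ℝ (Fin n)) (i : Fin n) : |x i| ≤ ‖x‖ := by
  have h1 : |x i| = Real.sqrt ((x i) ^ 2) := (Real.sqrt_sq_eq_abs _).symm
  have h2 : ‖x‖ = Real.sqrt (‖x‖ ^ 2) := (Real.sqrt_sq (norm_nonneg _)).symm
  rw [h1, h2, norm_sq_euclid]
  apply Real.sqrt_le_sqrt
  exact Finset.single_le_sum (f := fun j => (x j) ^ 2) (fun j _ => sq_nonneg _) (Finset.mem_univ i)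

/-- Auxiliary: squared norm of an `mkE` point. -/
lemma norm_mkE_sq {m : ℕ} (t : ℝ) (v : EuclideanSpace ℝ (Fin m)) :
    ‖mkE t v‖ ^ 2 = t ^ 2 + ‖v‖ ^ 2 := by
  rw [norm_sq_euclid, norm_sq_euclid, Fin.sum_univ_succ]
  simp [mkE]

/-- Auxiliary: triangle-type bound for `mkE`. -/
lemma norm_mkE_le {m : ℕ} (t : ℝ) (v : EuclideanSpace ℝ (Fin m)) :
    ‖mkE t v‖ ≤ |t| + ‖v‖ := by
  have h2 : ‖mkE t v‖ = Real.sqrt (‖mkE t v‖ ^ 2) := (Real.sqrt_sq (norm_nonneg _)).symm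
  rw [h2, norm_mkE_sq]
  have h : t ^ 2 + ‖v‖ ^ 2 ≤ (|t| + ‖v‖) ^ 2 := by
    nlinarith [abs_nonneg t, norm_nonneg v, sq_abs t]
  calc Real.sqrt (t ^ 2 + ‖v‖ ^ 2) ≤ Real.sqrt ((|t| + ‖v‖) ^ 2) := Real.sqrt_le_sqrt h
    _ = |t| + ‖v‖ := Real.sqrt_sq (by positivity)

/-- Auxiliary: norm of a purely horizontal `mkE` point. -/
lemma norm_mkE_zero {m : ℕ} (t : ℝ) : ‖mkE t (0 : EuclideanSpace ℝ (Fin m))‖ = |t| := by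
  have h2 : ‖mkE t (0 : EuclideanSpace ℝ (Fin m))‖
      = Real.sqrt (‖mkE t (0 : EuclideanSpace ℝ (Fin m))‖ ^ 2) := (Real.sqrt_sq (norm_nonneg _)).symm
  rw [h2, norm_mkE_sq]
  simp [Real.sqrt_sq_eq_abs]

/-- Auxiliary: `c^(3/2) = c·√c`. -/
lemma rpow_three_halves (c : ℝ) (hc : 0 < c) : c ^ ((3:ℝ)/2) = c * Real.sqrt c := by
  rw [show (3:ℝ)/2 = 1 + 1/2 by norm_num, Real.rpow_add hc, Real.rpow_one, ← Real.sqrt_eq_rpow]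

/-- Auxiliary: stepping between thickenings. -/
lemma thick_step {n : ℕ} {B : Set (EuclideanSpace ℝ (Fin n))} {a d : ℝ}
    {x y : EuclideanSpace ℝ (Fin n)} (hx : x ∈ Metric.thickening a B) (hd : ‖y - x‖ ≤ d) :
    y ∈ Metric.thickening (a + d) B := by
  rw [Metric.mem_thickening_iff] at hx ⊢
  obtain ⟨z, hz, hxz⟩ := hx
  refine ⟨z, hz, ?_⟩
  have h1 : dist y z ≤ dist y x + dist x z := dist_triangle _ _ _
  have h2 : dist y x = ‖y - x‖ := dist_eq_norm _ _
  linarith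

/-- Auxiliary: every point lies in the cube indexed by the floors of its coordinates. -/
lemma mem_cube_floor {m : ℕ} {frk : ℝ} (h : 0 < frk) (w : EuclideanSpace ℝ (Fin m)) :
    w ∈ Qcube frk (fun i => ⌊w i / frk⌋) := by
  intro i
  constructor
  · calc frk * ((⌊w i / frk⌋ : ℤ) : ℝ) ≤ frk * (w i / frk) :=
        mul_le_mul_of_nonneg_left (Int.floor_le (w i / frk)) h.le
      _ = w i := by field_simp
  · calc w i = frk * (w i / frk) := by field_simp
      _ < frk * ((⌊w i / frk⌋ : ℝ) + 1) :=
        (mul_lt_mul_iff_right₀ h).mpr (by exact_mod_cast Int.lt_floor_add_one (w i / frk))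

/-- Auxiliary: two points of the same cube are at distance at most `√(m+1)·frk`. -/
lemma norm_sub_le_of_mem_cube {m : ℕ} {frk : ℝ} (hf : 0 ≤ frk) {j : Fin m → ℤ}
    {v w : EuclideanSpace ℝ (Fin m)} (hv : v ∈ Qcube frk j) (hw : w ∈ Qcube frk j) :
    ‖v - w‖ ≤ Real.sqrt ((m + 1 : ℕ) : ℝ) * frk := by
  have key : ‖v - w‖ ^ 2 ≤ (Real.sqrt ((m + 1 : ℕ) : ℝ) * frk) ^ 2 := by
    rw [norm_sq_euclid, mul_pow, Real.sq_sqrt (by positivity)]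
    have hsub : ∀ i : Fin m, (v - w) i = v i - w i := fun i => rfl
    calc ∑ i, ((v - w) i) ^ 2 ≤ ∑ _i : Fin m, frk ^ 2 :=
          Finset.sum_le_sum (fun i _ => by
            rw [hsub]
            nlinarith [(hv i).1, (hv i).2, (hw i).1, (hw i).2])
      _ = (m : ℝ) * frk ^ 2 := by
          rw [Finset.sum_const, Finset.card_univ, Fintype.card_fin, nsmul_eq_mul]
      _ ≤ ((m + 1 : ℕ) : ℝ) * frk ^ 2 := by
          have hm : ((m : ℕ) : ℝ) ≤ ((m + 1 : ℕ) : ℝ) := by exact_mod_cast Nat.le_succ m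
          nlinarith [sq_nonneg frk]
  have h1 : ‖v - w‖ = Real.sqrt (‖v - w‖ ^ 2) := (Real.sqrt_sq (norm_nonneg _)).symm
  rw [h1]
  calc Real.sqrt (‖v - w‖ ^ 2) ≤ Real.sqrt ((Real.sqrt ((m + 1 : ℕ) : ℝ) * frk) ^ 2) :=
        Real.sqrt_le_sqrt key
    _ = _ := Real.sqrt_sq (by positivity)

/-- Auxiliary: norm of a purely vertical `mkE` point. -/
lemma norm_mkE_zero' {m : ℕ} (w : EuclideanSpace ℝ (Fin m)) : ‖mkE (0:ℝ) w‖ = ‖w‖ := by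
  have h2 : ‖mkE (0:ℝ) w‖ = Real.sqrt (‖mkE (0:ℝ) w‖ ^ 2) := (Real.sqrt_sq (norm_nonneg _)).symm
  rw [h2, norm_mkE_sq]
  simp [Real.sqrt_sq (norm_nonneg w)]
/-- Proposition 1.1 of the paper, real form.  Near a simple resonance the
level sets of `∂₁h₀` are graphs `y₁ = η(ϖ, ŷ)` over the uniform domain `Q` of slow actions,
with Lipschitz dependence on the level `ϖ`. -/
theorem resonance_graph (m : ℕ) (hm : 1 ≤ m)
    (γ L r : ℝ) (hγ : 0 < γ) (hL : 0 < L) (hr : 0 < r)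
    (k : Fin (m + 1) → ℤ) (hk : k ≠ 0)
    (B : Set (EuclideanSpace ℝ (Fin (m + 1))))
    (hBne : B.Nonempty) (hBopen : IsOpen B) (hBconv : Convex ℝ B)
    (hBbd : Bornology.IsBounded B)
    (rk tk frk w0 : ℝ)
    (hrk : rk = r / ((m + 1) * normInfZ k))
    (htk : tk = min 1 (γ * ‖castZ k‖ / (2 * L)))
    (hfrk : frk = tk * r / (8 * ((m + 1 : ℕ) : ℝ) ^ ((3 : ℝ) / 2) * ‖castZ k‖))
    (hw0 : w0 = Real.sqrt ((m + 1 : ℕ) : ℝ) * L * ‖castZ k‖ * frk)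
    (h0 : EuclideanSpace ℝ (Fin (m + 1)) → ℝ)
    (hsmooth : ContDiffOn ℝ 1 h0 (Metric.thickening (2 * rk) B))
    (hLip : ∀ v ∈ Metric.thickening (2 * rk) B, ∀ v' ∈ Metric.thickening (2 * rk) B,
      |D1 h0 v - D1 h0 v'| ≤ L * ‖castZ k‖ * ‖v - v'‖)
    (hmono : ∀ (t t' : ℝ) (vh : EuclideanSpace ℝ (Fin m)),
      mkE t vh ∈ Metric.thickening (2 * rk) B →
      mkE t' vh ∈ Metric.thickening (2 * rk) B → t' < t →
      γ * ‖castZ k‖ ^ 2 * (t - t') ≤ D1 h0 (mkE t vh) - D1 h0 (mkE t' vh)) :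
    ∃ η : ℝ → EuclideanSpace ℝ (Fin m) → ℝ,
      (∀ ϖ : ℝ, |ϖ| ≤ w0 → ∀ vh ∈ Qset h0 B rk frk,
        mkE (η ϖ vh) vh ∈ Metric.thickening ((3 / 2) * rk) B ∧
        D1 h0 (mkE (η ϖ vh) vh) = ϖ) ∧
      (∀ ϖ : ℝ, |ϖ| ≤ w0 →
        {v ∈ Metric.thickening rk B | D1 h0 v = ϖ} ⊆
          {v | ∃ vh ∈ Qset h0 B rk frk, v = mkE (η ϖ vh) vh}) ∧
      (∀ ϖ ϖ' : ℝ, |ϖ| ≤ w0 → |ϖ'| ≤ w0 → ∀ vh ∈ Qset h0 B rk frk,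
        |η ϖ vh - η ϖ' vh| ≤ |ϖ - ϖ'| / (γ * ‖castZ k‖ ^ 2)) := by
  classical
  -- basic positivity facts
  have hM : (0:ℝ) < ((m + 1 : ℕ) : ℝ) := by positivity
  have hkC : castZ k ≠ 0 := by
    intro h
    apply hk
    funext i
    have := congrArg (fun x : EuclideanSpace ℝ (Fin (m + 1)) => x i) h
    simpa [castZ] using this
  have hK : 0 < ‖castZ k‖ := norm_pos_iff.mpr hkC
  have hN : 0 < normInfZ k := by
    obtain ⟨i, hi⟩ : ∃ i, k i ≠ 0 := by
      by_contra h; push_neg at h; exact hk (funext h)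
    have h1 : 1 ≤ (k i).natAbs := Int.natAbs_pos.mpr hi
    have h2 : (1:ℕ) ≤ Finset.univ.sup fun i => (k i).natAbs :=
      le_trans h1 (Finset.le_sup (f := fun i => (k i).natAbs) (Finset.mem_univ i))
    unfold normInfZ
    exact_mod_cast lt_of_lt_of_le zero_lt_one (by exact_mod_cast h2)
  have hNK : normInfZ k ≤ ‖castZ k‖ := by
    obtain ⟨i0, -, hi0⟩ := Finset.exists_mem_eq_sup Finset.univ Finset.univ_nonempty
      (fun i => (k i).natAbs)
    rw [normInfZ, hi0]
    have h1 : (((k i0).natAbs : ℕ) : ℝ) = |castZ k i0| := by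
      simp [castZ, Nat.cast_natAbs]
    rw [h1]
    exact abs_apply_le_norm _ _
  have htk1 : tk ≤ 1 := by rw [htk]; exact min_le_left _ _
  have htkK : 2 * L * tk ≤ γ * ‖castZ k‖ := by
    have h1 : tk ≤ γ * ‖castZ k‖ / (2 * L) := by rw [htk]; exact min_le_right _ _
    have h2 : (0:ℝ) < 2 * L := by positivity
    calc 2 * L * tk ≤ 2 * L * (γ * ‖castZ k‖ / (2 * L)) :=
          mul_le_mul_of_nonneg_left h1 h2.le
      _ = γ * ‖castZ k‖ := by field_simp
  have htk0 : 0 < tk := by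
    rw [htk]; exact lt_min zero_lt_one (by positivity)
  have hrk0 : 0 < rk := by
    rw [hrk]; exact div_pos hr (mul_pos (by positivity) hN)
  have hfrk0 : 0 < frk := by
    rw [hfrk]
    exact div_pos (by positivity) (by positivity)
  have hw0pos : 0 < w0 := by
    rw [hw0]
    have : 0 < Real.sqrt ((m + 1 : ℕ) : ℝ) := Real.sqrt_pos.mpr hM
    positivity
  -- key size estimates
  have hEeq : Real.sqrt ((m + 1 : ℕ) : ℝ) * frk
      = tk * r / (8 * ((m + 1 : ℕ) : ℝ) * ‖castZ k‖) := by
    rw [hfrk, rpow_three_halves _ hM]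
    have hs0 : Real.sqrt ((m + 1 : ℕ) : ℝ) ≠ 0 := by positivity
    field_simp
  have hsfrk_le : Real.sqrt ((m + 1 : ℕ) : ℝ) * frk ≤ rk / 8 := by
    rw [hEeq, hrk, div_div, div_le_div_iff₀ (by positivity) (by positivity)]
    push_cast
    have h1 : tk * normInfZ k ≤ 1 * ‖castZ k‖ := mul_le_mul htk1 hNK hN.le zero_le_one
    nlinarith [mul_le_mul_of_nonneg_left h1 (show (0:ℝ) ≤ 8 * ((m:ℝ) + 1) * r by positivity)]
  have hw0' : w0 = L * tk * r / (8 * ((m + 1 : ℕ) : ℝ)) := by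
    rw [hw0, show Real.sqrt ((m + 1 : ℕ) : ℝ) * L * ‖castZ k‖ * frk
        = L * ‖castZ k‖ * (Real.sqrt ((m + 1 : ℕ) : ℝ) * frk) by ring, hEeq]
    field_simp
  have hδ_le : 2 * w0 / (γ * ‖castZ k‖ ^ 2) ≤ rk / 8 := by
    rw [hw0', hrk, div_div]
    have hLHS : 2 * (L * tk * r / (8 * ((m + 1 : ℕ) : ℝ))) / (γ * ‖castZ k‖ ^ 2)
        = (2 * L * tk * r) / ((8 * ((m + 1 : ℕ) : ℝ)) * (γ * ‖castZ k‖ ^ 2)) := by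
      field_simp
    rw [hLHS, div_le_div_iff₀ (by positivity) (by positivity)]
    push_cast
    have h1 : (2 * L * tk) * normInfZ k ≤ (γ * ‖castZ k‖) * ‖castZ k‖ :=
      mul_le_mul htkK hNK hN.le (by positivity)
    nlinarith [mul_le_mul_of_nonneg_left h1 (show (0:ℝ) ≤ 8 * ((m:ℝ) + 1) * r by positivity)]
  -- uniqueness of the graph point on each vertical line
  have huniq : ∀ (t t' : ℝ) (vh : EuclideanSpace ℝ (Fin m)),
      mkE t vh ∈ Metric.thickening (2 * rk) B → mkE t' vh ∈ Metric.thickening (2 * rk) B →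
      D1 h0 (mkE t vh) = D1 h0 (mkE t' vh) → t = t' := by
    intro t t' vh h1 h2 he
    by_contra hne
    rcases lt_or_gt_of_ne hne with h | h
    · have hmm := hmono t' t vh h2 h1 h
      have hp : 0 < γ * ‖castZ k‖ ^ 2 * (t' - t) :=
        mul_pos (mul_pos hγ (pow_pos hK 2)) (sub_pos.mpr h)
      linarith
    · have hmm := hmono t t' vh h1 h2 h
      have hp : 0 < γ * ‖castZ k‖ ^ 2 * (t - t') :=
        mul_pos (mul_pos hγ (pow_pos hK 2)) (sub_pos.mpr h)
      linarith
  -- continuity along vertical lines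
  have hcont : ∀ (vh : EuclideanSpace ℝ (Fin m)) (s : Set ℝ),
      (∀ t ∈ s, mkE t vh ∈ Metric.thickening (2 * rk) B) →
      ContinuousOn (fun t => D1 h0 (mkE t vh)) s := by
    intro vh s hs
    have hlip : LipschitzOnWith (Real.toNNReal (L * ‖castZ k‖))
        (fun t => D1 h0 (mkE t vh)) s := by
      rw [lipschitzOnWith_iff_dist_le_mul]
      intro x hx y hy
      have h1 := hLip _ (hs x hx) _ (hs y hy)
      have h2 : mkE x vh - mkE y vh = mkE (x - y) 0 := by rw [mkE_sub, sub_self]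
      rw [Real.dist_eq, Real.dist_eq, Real.coe_toNNReal _ (by positivity)]
      calc |D1 h0 (mkE x vh) - D1 h0 (mkE y vh)|
          ≤ L * ‖castZ k‖ * ‖mkE x vh - mkE y vh‖ := h1
        _ = L * ‖castZ k‖ * |x - y| := by rw [h2, norm_mkE_zero]
    exact hlip.continuousOn
  -- main existence of graph points over Q
  have hex : ∀ ϖ : ℝ, |ϖ| ≤ w0 → ∀ vh ∈ Qset h0 B rk frk,
      ∃ t, D1 h0 (mkE t vh) = ϖ ∧ mkE t vh ∈ Metric.thickening ((3 / 2) * rk) B := by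
    intro ϖ hϖ vh hvh
    rw [Qset, Set.mem_iUnion₂] at hvh
    obtain ⟨j, hj, hvhj⟩ := hvh
    obtain ⟨z, hzZ, hzQ⟩ := hj
    obtain ⟨hz54, hz0⟩ := hzZ
    have hzT2 : z ∈ Metric.thickening (2 * rk) B :=
      Metric.thickening_mono (by linarith) B hz54
    have hnear : ‖vh - tailE z‖ ≤ Real.sqrt ((m + 1 : ℕ) : ℝ) * frk :=
      norm_sub_le_of_mem_cube hfrk0.le hvhj hzQ
    set t0 := z 0 with ht0
    have hzeq : mkE t0 (tailE z) = z := mkE_eta z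
    set δ := 2 * w0 / (γ * ‖castZ k‖ ^ 2) with hδdef
    have hδ0 : 0 < δ := by positivity
    have hdom32 : ∀ t, |t - t0| ≤ δ → mkE t vh ∈ Metric.thickening ((3 / 2) * rk) B := by
      intro t ht
      have hd : ‖mkE t vh - z‖ ≤ rk / 4 := by
        rw [← hzeq, mkE_sub]
        calc ‖mkE (t - t0) (vh - tailE z)‖ ≤ |t - t0| + ‖vh - tailE z‖ := norm_mkE_le _ _
          _ ≤ δ + Real.sqrt ((m + 1 : ℕ) : ℝ) * frk := add_le_add ht hnear
          _ ≤ rk / 8 + rk / 8 := add_le_add hδ_le hsfrk_le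
          _ = rk / 4 := by ring
      exact Metric.thickening_mono (by linarith) B (thick_step hz54 hd)
    have hdomT2 : ∀ t, |t - t0| ≤ δ → mkE t vh ∈ Metric.thickening (2 * rk) B :=
      fun t ht => Metric.thickening_mono (by linarith) B (hdom32 t ht)
    have hdomz : ∀ t, |t - t0| ≤ δ → mkE t (tailE z) ∈ Metric.thickening (2 * rk) B := by
      intro t ht
      have hd : ‖mkE t (tailE z) - z‖ ≤ rk / 8 := by
        rw [← hzeq, mkE_sub, tailE_mkE, sub_self, norm_mkE_zero]
        linarith
      exact Metric.thickening_mono (by linarith) B (thick_step hz54 hd)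
    have habsδ : |t0 + δ - t0| ≤ δ := by
      rw [show t0 + δ - t0 = δ by ring, abs_of_nonneg hδ0.le]
    have habsδ' : |t0 - δ - t0| ≤ δ := by
      rw [show t0 - δ - t0 = -δ by ring, abs_neg, abs_of_nonneg hδ0.le]
    have habs0 : |t0 - t0| ≤ δ := by
      rw [sub_self, abs_zero]; exact hδ0.le
    have hLKnear : L * ‖castZ k‖ * ‖vh - tailE z‖ ≤ w0 := by
      rw [hw0]
      have hh := mul_le_mul_of_nonneg_left hnear (show (0:ℝ) ≤ L * ‖castZ k‖ by positivity)
      nlinarith [hh]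
    have hcδ : γ * ‖castZ k‖ ^ 2 * δ = 2 * w0 := by
      rw [hδdef]; field_simp
    have hub : w0 ≤ D1 h0 (mkE (t0 + δ) vh) := by
      have h1 := hmono (t0 + δ) t0 (tailE z) (hdomz _ habsδ) (hdomz _ habs0) (by linarith)
      rw [hzeq, hz0, show t0 + δ - t0 = δ by ring] at h1
      have h2 := hLip (mkE (t0 + δ) vh) (hdomT2 _ habsδ) (mkE (t0 + δ) (tailE z)) (hdomz _ habsδ)
      have h3 : ‖mkE (t0 + δ) vh - mkE (t0 + δ) (tailE z)‖ = ‖vh - tailE z‖ := by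
        rw [mkE_sub, sub_self, norm_mkE_zero']
      rw [h3] at h2
      linarith [(abs_le.mp h2).1, hcδ, hLKnear]
    have hlb : D1 h0 (mkE (t0 - δ) vh) ≤ -w0 := by
      have h1 := hmono t0 (t0 - δ) (tailE z) (hdomz _ habs0) (hdomz _ habsδ') (by linarith)
      rw [hzeq, hz0, show t0 - (t0 - δ) = δ by ring] at h1
      have h2 := hLip (mkE (t0 - δ) vh) (hdomT2 _ habsδ') (mkE (t0 - δ) (tailE z)) (hdomz _ habsδ')
      have h3 : ‖mkE (t0 - δ) vh - mkE (t0 - δ) (tailE z)‖ = ‖vh - tailE z‖ := by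
        rw [mkE_sub, sub_self, norm_mkE_zero']
      rw [h3] at h2
      linarith [(abs_le.mp h2).2, hcδ, hLKnear]
    have hcont' : ContinuousOn (fun t => D1 h0 (mkE t vh)) (Set.Icc (t0 - δ) (t0 + δ)) := by
      apply hcont
      intro t ht
      apply hdomT2
      rw [abs_le]
      exact ⟨by linarith [ht.1], by linarith [ht.2]⟩
    have hmemI : ϖ ∈ Set.Icc ((fun t => D1 h0 (mkE t vh)) (t0 - δ))
        ((fun t => D1 h0 (mkE t vh)) (t0 + δ)) := by
      constructor
      · simp only
        linarith [(abs_le.mp hϖ).1]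
      · simp only
        linarith [(abs_le.mp hϖ).2]
    obtain ⟨t, htI, hft⟩ := intermediate_value_Icc (by linarith : t0 - δ ≤ t0 + δ) hcont' hmemI
    refine ⟨t, hft, hdom32 t ?_⟩
    rw [abs_le]
    exact ⟨by linarith [htI.1], by linarith [htI.2]⟩
  -- every level point over the thinner thickening projects into Q
  have hzex : ∀ ϖ : ℝ, |ϖ| ≤ w0 → ∀ v, v ∈ Metric.thickening rk B → D1 h0 v = ϖ →
      tailE v ∈ Qset h0 B rk frk := by
    intro ϖ hϖ v hv hDv
    set t1 := v 0 with ht1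
    have hveq : mkE t1 (tailE v) = v := mkE_eta v
    set δ := 2 * w0 / (γ * ‖castZ k‖ ^ 2) with hδdef
    have hδ0 : 0 < δ := by positivity
    have hdom54 : ∀ t, |t - t1| ≤ δ / 2 → mkE t (tailE v) ∈ Metric.thickening ((5 / 4) * rk) B := by
      intro t ht
      have hd : ‖mkE t (tailE v) - v‖ ≤ rk / 4 := by
        rw [← hveq, mkE_sub, tailE_mkE, sub_self, norm_mkE_zero]
        linarith
      exact Metric.thickening_mono (by linarith) B (thick_step hv hd)
    have hdomT2 : ∀ t, |t - t1| ≤ δ / 2 → mkE t (tailE v) ∈ Metric.thickening (2 * rk) B :=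
      fun t ht => Metric.thickening_mono (by linarith) B (hdom54 t ht)
    have habsδ : |t1 + δ / 2 - t1| ≤ δ / 2 := by
      rw [show t1 + δ / 2 - t1 = δ / 2 by ring, abs_of_nonneg (by linarith)]
    have habsδ' : |t1 - δ / 2 - t1| ≤ δ / 2 := by
      rw [show t1 - δ / 2 - t1 = -(δ / 2) by ring, abs_neg, abs_of_nonneg (by linarith)]
    have habs0 : |t1 - t1| ≤ δ / 2 := by
      rw [sub_self, abs_zero]; linarith
    have hcδ : γ * ‖castZ k‖ ^ 2 * (δ / 2) = w0 := by
      rw [hδdef]; field_simp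
    have hD1v : D1 h0 (mkE t1 (tailE v)) = ϖ := by rw [hveq]; exact hDv
    have hub : 0 ≤ D1 h0 (mkE (t1 + δ / 2) (tailE v)) := by
      have h1 := hmono (t1 + δ / 2) t1 (tailE v) (hdomT2 _ habsδ) (hdomT2 _ habs0)
        (by linarith)
      rw [hD1v, show t1 + δ / 2 - t1 = δ / 2 by ring] at h1
      linarith [(abs_le.mp hϖ).1]
    have hlb : D1 h0 (mkE (t1 - δ / 2) (tailE v)) ≤ 0 := by
      have h1 := hmono t1 (t1 - δ / 2) (tailE v) (hdomT2 _ habs0) (hdomT2 _ habsδ')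
        (by linarith)
      rw [hD1v, show t1 - (t1 - δ / 2) = δ / 2 by ring] at h1
      linarith [(abs_le.mp hϖ).2]
    have hcont' : ContinuousOn (fun t => D1 h0 (mkE t (tailE v)))
        (Set.Icc (t1 - δ / 2) (t1 + δ / 2)) := by
      apply hcont
      intro t ht
      apply hdomT2
      rw [abs_le]
      exact ⟨by linarith [ht.1], by linarith [ht.2]⟩
    have hmemI : (0:ℝ) ∈ Set.Icc ((fun t => D1 h0 (mkE t (tailE v))) (t1 - δ / 2))
        ((fun t => D1 h0 (mkE t (tailE v))) (t1 + δ / 2)) := ⟨hlb, hub⟩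
    obtain ⟨t2, ht2I, hft2⟩ := intermediate_value_Icc
      (by linarith : t1 - δ / 2 ≤ t1 + δ / 2) hcont' hmemI
    have hZm : mkE t2 (tailE v) ∈ Zset h0 B rk := by
      refine ⟨hdom54 t2 ?_, hft2⟩
      rw [abs_le]
      exact ⟨by linarith [ht2I.1], by linarith [ht2I.2]⟩
    rw [Qset, Set.mem_iUnion₂]
    refine ⟨fun i => ⌊tailE v i / frk⌋, ⟨mkE t2 (tailE v), hZm, ?_⟩, mem_cube_floor hfrk0 _⟩
    rw [tailE_mkE]
    exact mem_cube_floor hfrk0 _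
  -- assemble the graph function
  refine ⟨fun ϖ vh =>
      if h : ∃ t, D1 h0 (mkE t vh) = ϖ ∧ mkE t vh ∈ Metric.thickening ((3 / 2) * rk) B
      then h.choose else 0, ?_, ?_, ?_⟩
  · -- part (i)
    intro ϖ hϖ vh hvh
    have hp := hex ϖ hϖ vh hvh
    simp only [dif_pos hp]
    exact ⟨hp.choose_spec.2, hp.choose_spec.1⟩
  · -- part (ii)
    intro ϖ hϖ v hvmem
    obtain ⟨hv1, hv2⟩ := hvmem
    have hQ : tailE v ∈ Qset h0 B rk frk := hzex ϖ hϖ v hv1 hv2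
    refine ⟨tailE v, hQ, ?_⟩
    have hp := hex ϖ hϖ (tailE v) hQ
    simp only [dif_pos hp]
    obtain ⟨hc1, hc2⟩ := hp.choose_spec
    have hvT2 : mkE (v 0) (tailE v) ∈ Metric.thickening (2 * rk) B := by
      rw [mkE_eta]
      exact Metric.thickening_mono (by linarith) B hv1
    have hD1v : D1 h0 (mkE (v 0) (tailE v)) = ϖ := by rw [mkE_eta]; exact hv2
    have heq : hp.choose = v 0 := by
      apply huniq _ _ (tailE v)
        (Metric.thickening_mono (by linarith) B hc2) hvT2
      rw [hc1, hD1v]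
    rw [heq, mkE_eta]
  · -- part (iii)
    intro ϖ ϖ' hϖ hϖ' vh hvh
    have hp := hex ϖ hϖ vh hvh
    have hp' := hex ϖ' hϖ' vh hvh
    simp only [dif_pos hp, dif_pos hp']
    obtain ⟨hc1, hc2⟩ := hp.choose_spec
    obtain ⟨hc1', hc2'⟩ := hp'.choose_spec
    set t := hp.choose
    set t' := hp'.choose
    have hT2 : mkE t vh ∈ Metric.thickening (2 * rk) B :=
      Metric.thickening_mono (by linarith) B hc2
    have hT2' : mkE t' vh ∈ Metric.thickening (2 * rk) B :=
      Metric.thickening_mono (by linarith) B hc2'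
    have hcpos : 0 < γ * ‖castZ k‖ ^ 2 := mul_pos hγ (pow_pos hK 2)
    have habs : ϖ' - ϖ ≤ |ϖ - ϖ'| := by
      rw [abs_sub_comm]
      exact le_abs_self _
    have habs' : ϖ - ϖ' ≤ |ϖ - ϖ'| := le_abs_self _
    rcases lt_trichotomy t t' with h | h | h
    · have hmm := hmono t' t vh hT2' hT2 h
      rw [hc1, hc1'] at hmm
      rw [abs_of_neg (by linarith : t - t' < 0), le_div_iff₀ hcpos]
      nlinarith
    · rw [h, sub_self, abs_zero]
      positivity
    · have hmm := hmono t t' vh hT2 hT2' h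
      rw [hc1, hc1'] at hmm
      rw [abs_of_pos (by linarith : 0 < t - t'), le_div_iff₀ hcpos]
      nlinarith
end
end

section
/- Let n ≥ 2 be an integer, y₁⁰ ∈ ℂ, ŷ⁰ ∈ ℂ^{n−1}, r₁, r̂ > 0, and let F be a holomorphic function on an open set containing the product 𝒴₁ × 𝒴̂, where 𝒴₁ is the closed ball of radius r₁ centred at y₁⁰ in ℂ and 𝒴̂ is the closed ball of radius r̂ centred at ŷ⁰ in ℂ^{n−1}. Suppose d ∈ ℂ, d ≠ 0, is such that sup_{ŷ ∈ 𝒴̂} |F(y₁⁰, ŷ)| ≤ |d|·r₁/2 and sup_{(y₁, ŷ) ∈ 𝒴₁ × 𝒴̂} |∂_{y₁}F(y₁, ŷ) − d| ≤ |d|/2. Then there exists a unique continuous function η : 𝒴̂ → 𝒴₁, holomorphic on the interior of 𝒴̂, such that F(η(ŷ), ŷ) = 0 for every ŷ ∈ 𝒴̂; moreover η is the fixed point of the contraction η ↦ η − F(η(·), ·)/d on the space of continuous maps 𝒴̂ → 𝒴₁ that are holomorphic in the interior of 𝒴̂, endowed with the sup-norm. -/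
open Metric Set Asymptotics Filter Topology

noncomputable section

theorem aux_implicit {E : Type*} [NormedAddCommGroup E] [NormedSpace ℂ E]
    (y₁ : ℂ) (yh : E) (r₁ rh : ℝ)
    (hr₁ : 0 < r₁) (hrh : 0 < rh)
    (F : ℂ × E → ℂ) (U : Set (ℂ × E)) (hUopen : IsOpen U)
    (hU : closedBall y₁ r₁ ×ˢ closedBall yh rh ⊆ U)
    (hF : DifferentiableOn ℂ F U)
    (d : ℂ) (hd : d ≠ 0)
    (hF0 : ∀ z ∈ closedBall yh rh, ‖F (y₁, z)‖ ≤ ‖d‖ * r₁ / 2)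
    (hF1 : ∀ w ∈ closedBall y₁ r₁, ∀ z ∈ closedBall yh rh,
      ‖deriv (fun u => F (u, z)) w - d‖ ≤ ‖d‖ / 2) :
    ∃ η : E → ℂ,
      (∀ z ∈ closedBall yh rh, η z ∈ closedBall y₁ r₁) ∧
      ContinuousOn η (closedBall yh rh) ∧
      DifferentiableOn ℂ η (interior (closedBall yh rh)) ∧
      (∀ z ∈ closedBall yh rh, F (η z, z) = 0) ∧
      (∀ η' : E → ℂ,
        (∀ z ∈ closedBall yh rh, η' z ∈ closedBall y₁ r₁) →
        ContinuousOn η' (closedBall yh rh) →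
        DifferentiableOn ℂ η' (interior (closedBall yh rh)) →
        (∀ z ∈ closedBall yh rh, F (η' z, z) = 0) →
        ∀ z ∈ closedBall yh rh, η' z = η z) ∧
      (∀ z ∈ closedBall yh rh, η z - F (η z, z) / d = η z) := by
  have hdpos : 0 < ‖d‖ := norm_pos_iff.mpr hd
  have hdiffat : ∀ w ∈ closedBall y₁ r₁, ∀ z ∈ closedBall yh rh,
      DifferentiableAt ℂ F (w, z) := fun w hw z hz =>
    hF.differentiableAt (hUopen.mem_nhds (hU ⟨hw, hz⟩))
  have hslice : ∀ z ∈ closedBall yh rh, ∀ w ∈ closedBall y₁ r₁,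
      HasDerivAt (fun v : ℂ => F (v, z)) (deriv (fun v : ℂ => F (v, z)) w) w := by
    intro z hz w hw
    have h1 : DifferentiableAt ℂ (fun v : ℂ => F (v, z)) w :=
      (hdiffat w hw z hz).comp w (differentiableAt_id.prodMk (differentiableAt_const _))
    exact h1.hasDerivAt
  -- contraction estimate
  have hcontr : ∀ z ∈ closedBall yh rh, ∀ w ∈ closedBall y₁ r₁, ∀ w' ∈ closedBall y₁ r₁,
      ‖(w - F (w, z) / d) - (w' - F (w', z) / d)‖ ≤ 2⁻¹ * ‖w - w'‖ := by
    intro z hz w hw w' hw'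
    have hder : ∀ u ∈ closedBall y₁ r₁, HasDerivWithinAt (fun v : ℂ => v - F (v, z) / d)
        (1 - deriv (fun v : ℂ => F (v, z)) u / d) (closedBall y₁ r₁) u := fun u hu =>
      ((hasDerivAt_id u).sub ((hslice z hz u hu).div_const d)).hasDerivWithinAt
    have hbound : ∀ u ∈ closedBall y₁ r₁, ‖1 - deriv (fun v : ℂ => F (v, z)) u / d‖ ≤ 2⁻¹ := by
      intro u hu
      have h2 : 1 - deriv (fun v : ℂ => F (v, z)) u / d
          = -((deriv (fun v : ℂ => F (v, z)) u - d) / d) := by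
        field_simp
        ring
      rw [h2, norm_neg, norm_div, div_le_iff₀ hdpos]
      have := hF1 u hu z hz
      linarith
    exact Convex.norm_image_sub_le_of_norm_hasDerivWithin_le hder hbound
      (convex_closedBall _ _) hw' hw
  -- self-map
  have hmaps : ∀ z ∈ closedBall yh rh, ∀ w ∈ closedBall y₁ r₁,
      (w - F (w, z) / d) ∈ closedBall y₁ r₁ := by
    intro z hz w hw
    have h1 := hcontr z hz w hw y₁ (mem_closedBall_self hr₁.le)
    have h2 : ‖F (y₁, z) / d‖ ≤ r₁ / 2 := by
      rw [norm_div, div_le_iff₀ hdpos]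
      have := hF0 z hz
      nlinarith
    have hwle : ‖w - y₁‖ ≤ r₁ := by
      rw [mem_closedBall, dist_eq_norm] at hw; exact hw
    rw [mem_closedBall, dist_eq_norm]
    have h3 : (w - F (w, z) / d) - y₁
        = ((w - F (w, z) / d) - (y₁ - F (y₁, z) / d)) + (-(F (y₁, z) / d)) := by ring
    calc ‖(w - F (w, z) / d) - y₁‖
        ≤ ‖(w - F (w, z) / d) - (y₁ - F (y₁, z) / d)‖ + ‖-(F (y₁, z) / d)‖ := by
          rw [h3]; exact norm_add_le _ _
      _ ≤ 2⁻¹ * ‖w - y₁‖ + ‖F (y₁, z) / d‖ := by rw [norm_neg]; exact add_le_add_left h1 _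
      _ ≤ r₁ := by nlinarith
  -- existence and uniqueness of the zero for each z
  have key : ∀ z ∈ closedBall yh rh, ∃ w, w ∈ closedBall y₁ r₁ ∧ F (w, z) = 0 ∧
      (∀ w' ∈ closedBall y₁ r₁, F (w', z) = 0 → w' = w) := by
    intro z hz
    haveI : Nonempty ↥(closedBall y₁ r₁) := ⟨⟨y₁, mem_closedBall_self hr₁.le⟩⟩
    haveI : CompleteSpace ↥(closedBall y₁ r₁) := isClosed_closedBall.completeSpace_coe
    set G : ↥(closedBall y₁ r₁) → ↥(closedBall y₁ r₁) :=
      fun w => ⟨w.1 - F (w.1, z) / d, hmaps z hz w.1 w.2⟩ with hGdef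
    have hGc : ContractingWith (1/2 : NNReal) G := by
      constructor
      · rw [← NNReal.coe_lt_coe]; norm_num
      · apply LipschitzWith.of_dist_le_mul
        intro a b
        rw [Subtype.dist_eq, Subtype.dist_eq, dist_eq_norm, dist_eq_norm]
        have := hcontr z hz a.1 a.2 b.1 b.2
        push_cast
        calc ‖(a.1 - F (a.1, z) / d) - (b.1 - F (b.1, z) / d)‖ ≤ 2⁻¹ * ‖a.1 - b.1‖ := this
          _ = 1/2 * ‖a.1 - b.1‖ := by ring
      -- done?
    set w := ContractingWith.fixedPoint G hGc with hwdef
    have hfix : G w = w := hGc.fixedPoint_isFixedPt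
    have hzero : F (w.1, z) = 0 := by
      have h1 : w.1 - F (w.1, z) / d = w.1 := congrArg Subtype.val hfix
      have h2 : F (w.1, z) / d = 0 := by linear_combination w.1 - h1
      field_simp at h2
      simpa using h2
    refine ⟨w.1, w.2, hzero, ?_⟩
    intro w' hw' h0
    have hfix' : G ⟨w', hw'⟩ = ⟨w', hw'⟩ := by
      apply Subtype.ext
      simp only [hGdef, h0]
      ring
    have := hGc.fixedPoint_unique (x := ⟨w', hw'⟩) hfix'
    exact congrArg Subtype.val this
  classical
  set η : E → ℂ := fun z => if h : z ∈ closedBall yh rh then (key z h).choose else y₁ with hηdef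
  have hη_mem : ∀ z (h : z ∈ closedBall yh rh), η z ∈ closedBall y₁ r₁ ∧ F (η z, z) = 0 ∧
      (∀ w' ∈ closedBall y₁ r₁, F (w', z) = 0 → w' = η z) := by
    intro z h
    simp only [hηdef, dif_pos h]
    exact (key z h).choose_spec
  -- Lipschitz-type estimate
  have hest : ∀ z ∈ closedBall yh rh, ∀ z' ∈ closedBall yh rh,
      ‖η z - η z'‖ ≤ 2 / ‖d‖ * ‖F (η z', z) - F (η z', z')‖ := by
    intro z hz z' hz'
    obtain ⟨hm, h0, -⟩ := hη_mem z hz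
    obtain ⟨hm', h0', -⟩ := hη_mem z' hz'
    have h1 := hcontr z hz (η z) hm (η z') hm'
    have e1 : η z - η z' = ((η z - F (η z, z) / d) - (η z' - F (η z', z) / d))
        + (F (η z', z') - F (η z', z)) / d := by
      rw [h0, h0']; ring
    have h2 : ‖η z - η z'‖ ≤ 2⁻¹ * ‖η z - η z'‖ + ‖F (η z', z) - F (η z', z')‖ / ‖d‖ := by
      calc ‖η z - η z'‖ ≤ ‖(η z - F (η z, z) / d) - (η z' - F (η z', z) / d)‖
            + ‖(F (η z', z') - F (η z', z)) / d‖ := by rw [e1]; exact norm_add_le _ _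
        _ ≤ 2⁻¹ * ‖η z - η z'‖ + ‖F (η z', z) - F (η z', z')‖ / ‖d‖ := by
            have hnorm : ‖(F (η z', z') - F (η z', z)) / d‖
                = ‖F (η z', z) - F (η z', z')‖ / ‖d‖ := by
              rw [norm_div, norm_sub_rev]
            rw [hnorm]; exact add_le_add_left h1 _
    have h3 : 2 / ‖d‖ * ‖F (η z', z) - F (η z', z')‖
        = 2 * (‖F (η z', z) - F (η z', z')‖ / ‖d‖) := by ring
    linarith
  have hηcont : ContinuousOn η (closedBall yh rh) := by
    intro z' hz'
    have hm' := (hη_mem z' hz').1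
    have hFc : Tendsto (fun z => F (η z', z)) (𝓝[closedBall yh rh] z') (𝓝 (F (η z', z'))) := by
      have : ContinuousAt (fun z : E => F (η z', z)) z' :=
        (hdiffat _ hm' _ hz').continuousAt.comp
          ((continuous_const.prodMk continuous_id).continuousAt)
      exact this.continuousWithinAt
    rw [ContinuousWithinAt, tendsto_iff_dist_tendsto_zero]
    have hub : Tendsto (fun z => 2 / ‖d‖ * ‖F (η z', z) - F (η z', z')‖)
        (𝓝[closedBall yh rh] z') (𝓝 0) := by
      have h1 : Tendsto (fun z => F (η z', z) - F (η z', z'))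
          (𝓝[closedBall yh rh] z') (𝓝 0) := by
        simpa using hFc.sub (tendsto_const_nhds :
          Tendsto (fun _ : E => F (η z', z')) (𝓝[closedBall yh rh] z') _)
      have := (h1.norm.const_mul (2 / ‖d‖))
      simpa using this
    apply tendsto_of_tendsto_of_tendsto_of_le_of_le' tendsto_const_nhds hub
    · exact Eventually.of_forall (fun z => dist_nonneg)
    · filter_upwards [self_mem_nhdsWithin] with z hz
      rw [dist_eq_norm]
      exact hest z hz z' hz'
  have hηdiff : DifferentiableOn ℂ η (interior (closedBall yh rh)) := by
    intro z₀ hz₀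
    have hz₀' : z₀ ∈ closedBall yh rh := interior_subset hz₀
    have hKh_nhds : closedBall yh rh ∈ 𝓝 z₀ := mem_interior_iff_mem_nhds.mp hz₀
    obtain ⟨hm₀, h0₀, -⟩ := hη_mem z₀ hz₀'
    have hp : (η z₀, z₀) ∈ U := hU ⟨hm₀, hz₀'⟩
    have hFd : HasFDerivAt F (fderiv ℂ F (η z₀, z₀)) (η z₀, z₀) :=
      (hF.differentiableAt (hUopen.mem_nhds hp)).hasFDerivAt
    set L := fderiv ℂ F (η z₀, z₀) with hLdef
    set a : ℂ := L (1, 0) with hadef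
    have hderiv_a : HasDerivAt (fun v : ℂ => F (v, z₀)) a (η z₀) := by
      have hcomp : HasFDerivAt (fun v : ℂ => (v, z₀) : ℂ → ℂ × E)
          ((ContinuousLinearMap.id ℂ ℂ).prod 0) (η z₀) :=
        (hasFDerivAt_id (η z₀)).prodMk (hasFDerivAt_const z₀ (η z₀))
      have := (hFd.comp (η z₀) hcomp).hasDerivAt
      simpa [hadef, Function.comp_def] using this
    have ha : a ≠ 0 := by
      intro h
      have h1 := hF1 (η z₀) hm₀ z₀ hz₀'
      rw [hderiv_a.deriv, h, zero_sub, norm_neg] at h1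
      linarith
    set B : E →L[ℂ] ℂ := L.comp (ContinuousLinearMap.inr ℂ ℂ E) with hBdef
    have hηct : ContinuousAt η z₀ := hηcont.continuousAt hKh_nhds
    have hq : ContinuousAt (fun z : E => ((η z, z) : ℂ × E)) z₀ :=
      hηct.prodMk continuousAt_id
    have hO1 := hFd.isLittleO
    have hO2 := hO1.comp_tendsto hq
    have hev : ∀ᶠ z in 𝓝 z₀, F (η z, z) = 0 := by
      filter_upwards [hKh_nhds] with z hz using (hη_mem z hz).2.1
    have hO2' : (fun z => L ((η z, z) - (η z₀, z₀))) =o[𝓝 z₀]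
        fun z => ((η z, z) : ℂ × E) - (η z₀, z₀) := by
      have heq : (fun z => F (η z, z) - F (η z₀, z₀) - L (((η z, z) : ℂ × E) - (η z₀, z₀)))
          =ᶠ[𝓝 z₀] (fun z => -(L (((η z, z) : ℂ × E) - (η z₀, z₀)))) := by
        filter_upwards [hev] with z hz
        rw [hz, h0₀]; ring
      have := (hO2.congr' heq (EventuallyEq.refl _ _)).neg_left
      simpa [Function.comp_def] using this
    have hB2 : (fun z => η z - η z₀) =O[𝓝 z₀] fun z => z - z₀ := by
      have hFz : HasFDerivAt (fun z : E => F (η z₀, z))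
          (L.comp ((0 : E →L[ℂ] ℂ).prod (ContinuousLinearMap.id ℂ E))) z₀ :=
        hFd.comp z₀ ((hasFDerivAt_const (η z₀) z₀).prodMk (hasFDerivAt_id z₀))
      have h1 : (fun z => F (η z₀, z) - F (η z₀, z₀)) =O[𝓝 z₀] fun z => z - z₀ :=
        hFz.isBigO_sub
      have h2 : (fun z => η z - η z₀) =O[𝓝 z₀] (fun z => F (η z₀, z) - F (η z₀, z₀)) := by
        apply IsBigO.of_bound (2 / ‖d‖)
        filter_upwards [hKh_nhds] with z hz
        simpa using hest z hz z₀ hz₀'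
      exact h2.trans h1
    have hqO : (fun z => (((η z, z) : ℂ × E)) - (η z₀, z₀)) =O[𝓝 z₀] fun z => z - z₀ := by
      have : (fun z => (((η z, z) : ℂ × E)) - (η z₀, z₀))
          = fun z => ((η z - η z₀, z - z₀) : ℂ × E) := by
        funext z; rfl
      rw [this]
      exact hB2.prod_left (isBigO_refl _ _)
    have hO3 : (fun z => L (((η z, z) : ℂ × E) - (η z₀, z₀))) =o[𝓝 z₀] fun z => z - z₀ :=
      hO2'.trans_isBigO hqO
    have hsplit : ∀ z : E, L (((η z, z) : ℂ × E) - (η z₀, z₀))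
        = a * (η z - η z₀) + B (z - z₀) := by
      intro z
      have hdec : (((η z, z) : ℂ × E) - (η z₀, z₀))
          = (η z - η z₀) • ((1 : ℂ), (0 : E)) + ((0 : ℂ), z - z₀) := by
        apply Prod.ext <;> simp [smul_eq_mul]
      rw [hdec, map_add, map_smul, smul_eq_mul, hadef, hBdef]
      simp [ContinuousLinearMap.comp_apply]
      ring
    have hO4 : (fun z => a * (η z - η z₀) + B (z - z₀)) =o[𝓝 z₀] fun z => z - z₀ :=
      hO3.congr' (Eventually.of_forall fun z => hsplit z) (EventuallyEq.refl _ _)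
    have final : HasFDerivAt η (-(a⁻¹) • B) z₀ := by
      rw [hasFDerivAt_iff_isLittleO]
      have heq : (fun z => η z - η z₀ - (-(a⁻¹) • B) (z - z₀))
          = fun z => a⁻¹ * (a * (η z - η z₀) + B (z - z₀)) := by
        funext z
        simp only [ContinuousLinearMap.smul_apply, smul_eq_mul, neg_mul]
        field_simp
        ring
      rw [heq]
      exact hO4.const_mul_left a⁻¹
    exact final.differentiableAt.differentiableWithinAt
  refine ⟨η, fun z hz => (hη_mem z hz).1, hηcont, hηdiff, fun z hz => (hη_mem z hz).2.1,
    ?_, ?_⟩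
  · intro η' hmem' _ _ hzero' z hz
    exact (hη_mem z hz).2.2 (η' z) (hmem' z hz) (hzero' z hz)
  · intro z hz
    rw [(hη_mem z hz).2.1]
    simp


/-- contraction/implicit-function step in the proof of Proposition 1.1.
If `F` is holomorphic on a neighbourhood of the product of closed balls `𝒴₁ × 𝒴̂ ⊆ ℂ × ℂ^(n-1)`,
`d ≠ 0`, `|F(y₁⁰, ·)| ≤ |d| r₁ / 2` on `𝒴̂` and `|∂_{y₁}F − d| ≤ |d|/2` on `𝒴₁ × 𝒴̂`, then there
is a unique continuous `η : 𝒴̂ → 𝒴₁`, holomorphic on the interior of `𝒴̂`, with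
`F(η(ŷ), ŷ) = 0` on `𝒴̂`; moreover `η` is a fixed point of `η ↦ η − F(η(·), ·)/d`. -/
theorem holomorphic_implicit_function (n : ℕ) (hn : 2 ≤ n)
    (y₁ : ℂ) (yh : EuclideanSpace ℂ (Fin (n - 1))) (r₁ rh : ℝ)
    (hr₁ : 0 < r₁) (hrh : 0 < rh)
    (F : ℂ × EuclideanSpace ℂ (Fin (n - 1)) → ℂ)
    (U : Set (ℂ × EuclideanSpace ℂ (Fin (n - 1)))) (hUopen : IsOpen U)
    (hU : closedBall y₁ r₁ ×ˢ closedBall yh rh ⊆ U)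
    (hF : DifferentiableOn ℂ F U)
    (d : ℂ) (hd : d ≠ 0)
    (hF0 : ∀ z ∈ closedBall yh rh, ‖F (y₁, z)‖ ≤ ‖d‖ * r₁ / 2)
    (hF1 : ∀ w ∈ closedBall y₁ r₁, ∀ z ∈ closedBall yh rh,
      ‖deriv (fun u => F (u, z)) w - d‖ ≤ ‖d‖ / 2) :
    ∃ η : EuclideanSpace ℂ (Fin (n - 1)) → ℂ,
      (∀ z ∈ closedBall yh rh, η z ∈ closedBall y₁ r₁) ∧
      ContinuousOn η (closedBall yh rh) ∧
      DifferentiableOn ℂ η (interior (closedBall yh rh)) ∧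
      (∀ z ∈ closedBall yh rh, F (η z, z) = 0) ∧
      (∀ η' : EuclideanSpace ℂ (Fin (n - 1)) → ℂ,
        (∀ z ∈ closedBall yh rh, η' z ∈ closedBall y₁ r₁) →
        ContinuousOn η' (closedBall yh rh) →
        DifferentiableOn ℂ η' (interior (closedBall yh rh)) →
        (∀ z ∈ closedBall yh rh, F (η' z, z) = 0) →
        ∀ z ∈ closedBall yh rh, η' z = η z) ∧
      (∀ z ∈ closedBall yh rh, η z - F (η z, z) / d = η z) := by
  exact aux_implicit y₁ yh r₁ rh hr₁ hrh F U hUopen hU hF d hd hF0 hF1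
end
end

section
/- Let n ≥ 2 be an integer, let γ, L, α > 0, let K ≥ 1 be real, and let 𝕮 ≥ 2nL/γ. Let k ∈ ℤⁿ be a vector whose components have greatest common divisor 1, and let A be an n×n integer matrix with determinant 1 whose first row is k and whose entries satisfy max_{i,j}|A_{ij}| = |k|_∞. Let ω : ℝⁿ → ℝⁿ satisfy |ω(y) − ω(y')| ≤ L|y − y'| for all y, y' ∈ ℝⁿ. Let D̂ ⊆ ℝ^{n−1} and let η : [−α/𝕮, α/𝕮] × D̂ → ℝ satisfy |η(ϖ, v̂) − η(ϖ', v̂)| ≤ |ϖ − ϖ'|/(γ|k|²) for all ϖ, ϖ' ∈ [−α/𝕮, α/𝕮] and v̂ ∈ D̂. Say that a point v ∈ ℝⁿ belongs to Dᵏ if |ω(Aᵀv)·k| ≤ α/𝕮 and |π_k^⊥ω(Aᵀv)·ℓ| ≥ 3αK^{n+3}/|k| for every ℓ ∈ 𝒢ⁿ_K \ ℤk. Assume that for every v̂ ∈ D̂ there exists z₁ ∈ [η(−α/𝕮, v̂), η(α/𝕮, v̂)] such that (z₁, v̂) ∈ Dᵏ. Then for every v = (v₁, v̂) with v̂ ∈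 D̂ and η(−α/𝕮, v̂) ≤ v₁ ≤ η(α/𝕮, v̂), and for every ℓ ∈ 𝒢ⁿ_K \ ℤk, one has |π_k^⊥ω(Aᵀv)·ℓ| ≥ 2αK^{n+3}/|k|. -/
open MeasureTheory Set ENNReal Metric
open scoped RealInnerProductSpace

noncomputable section

open Matrix

/-- The max-norm `|k|_∞` of an integer vector, as a natural number. -/
def normInfN {n : ℕ} (k : Fin n → ℤ) : ℕ := Finset.univ.sup fun i => (k i).natAbs

/-- Multiplication of a real `n×n` matrix with a vector of `ℝⁿ`. -/
def mulVecE {n : ℕ} (A : Matrix (Fin n) (Fin n) ℝ) (v : EuclideanSpace ℝ (Fin n)) :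
    EuclideanSpace ℝ (Fin n) :=
  WithLp.toLp 2 (fun i => ∑ j, A i j * v j)

/-- The simply-resonant set `Dᵏ` expressed in the new variables `v`:  `v ∈ Dᵏ` iff
`|ω(Aᵀv)·k| ≤ α/𝕮` and `|π_k^⊥ ω(Aᵀv)·ℓ| ≥ 3αK^(n+3)/|k|` for all `ℓ ∈ 𝒢ⁿ_K \ ℤk`
(here `n = m+1`). -/
def Dk {m : ℕ} (ω : EuclideanSpace ℝ (Fin (m + 1)) → EuclideanSpace ℝ (Fin (m + 1)))
    (A : Matrix (Fin (m + 1)) (Fin (m + 1)) ℤ) (k : Fin (m + 1) → ℤ) (α C K : ℝ) :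
    Set (EuclideanSpace ℝ (Fin (m + 1))) :=
  {v | |⟪ω (mulVecE ((A.map ((↑) : ℤ → ℝ))ᵀ) v), castZ k⟫| ≤ α / C ∧
    ∀ l : Fin (m + 1) → ℤ, GnK K l → ¬ inZk k l →
      3 * α * K ^ (m + 1 + 3) / ‖castZ k‖ ≤
        |⟪projPerp (castZ k) (ω (mulVecE ((A.map ((↑) : ℤ → ℝ))ᵀ) v)), castZ l⟫|} 

lemma projPerp_sub {n : ℕ} (k w w' : EuclideanSpace ℝ (Fin n)) :
    projPerp k w - projPerp k w' = projPerp k (w - w') := by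
  simp only [projPerp, inner_sub_left]
  rw [sub_div, sub_smul]
  abel

lemma norm_projPerp_le {n : ℕ} (k u : EuclideanSpace ℝ (Fin n)) :
    ‖projPerp k u‖ ≤ ‖u‖ := by
  rcases eq_or_ne k 0 with rfl | hk
  · simp [projPerp]
  · have hk2 : (0:ℝ) < ‖k‖ := norm_pos_iff.mpr hk
    have hsq : ‖projPerp k u‖^2 ≤ ‖u‖^2 := by
      rw [projPerp, norm_sub_sq_real, real_inner_smul_right, norm_smul, Real.norm_eq_abs,
        mul_pow, sq_abs, div_pow]
      have h1 : (0:ℝ) < ‖k‖^2 := by positivity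
      have h2 : ⟪u, k⟫ / ‖k‖ ^ 2 * ⟪u, k⟫ = ⟪u,k⟫^2 / ‖k‖^2 := by ring
      rw [h2]
      have h3 : ⟪u,k⟫^2/(‖k‖^2)^2 * ‖k‖^2 = ⟪u,k⟫^2/‖k‖^2 := by field_simp
      rw [h3]
      nlinarith [sq_nonneg ⟪u,k⟫, div_nonneg (sq_nonneg ⟪u,k⟫) h1.le]
    nlinarith [norm_nonneg (projPerp k u), norm_nonneg u]

lemma norm_castZ_le_normOne {n : ℕ} (l : Fin n → ℤ) : ‖castZ l‖ ≤ normOneZ l := by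
  rw [EuclideanSpace.norm_eq]
  have h1 : ∑ i, ‖castZ l i‖^2 ≤ (∑ i, |(l i : ℝ)|)^2 := by
    have hS : ∀ i ∈ Finset.univ, ‖castZ l i‖^2 ≤ |(l i:ℝ)| * ∑ j, |(l j : ℝ)| := by
      intro i _
      have : |(l i:ℝ)| ≤ ∑ j, |(l j:ℝ)| :=
        Finset.single_le_sum (f := fun j => |(l j:ℝ)|) (fun j _ => abs_nonneg _) (Finset.mem_univ i)
      have h0 : ‖castZ l i‖ = |(l i:ℝ)| := by simp [castZ, Real.norm_eq_abs]
      rw [h0, sq]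
      exact mul_le_mul_of_nonneg_left this (abs_nonneg _)
    calc ∑ i, ‖castZ l i‖^2 ≤ ∑ i, |(l i:ℝ)| * ∑ j, |(l j : ℝ)| := Finset.sum_le_sum hS
      _ = (∑ i, |(l i : ℝ)|)^2 := by rw [← Finset.sum_mul, sq]
  calc Real.sqrt (∑ i, ‖castZ l i‖^2) ≤ Real.sqrt ((∑ i, |(l i : ℝ)|)^2) :=
        Real.sqrt_le_sqrt h1
    _ = ∑ i, |(l i : ℝ)| := Real.sqrt_sq (Finset.sum_nonneg fun i _ => abs_nonneg _)
    _ = normOneZ l := rfl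

/-- Lemma 1.2 of the paper.  On the normal set
`Ďᵏ = {(v₁, v̂) : η(−α/𝕮, v̂) ≤ v₁ ≤ η(α/𝕮, v̂), v̂ ∈ D̂}` one keeps the non-resonance bound
`|π_k^⊥ ω(Aᵀv)·ℓ| ≥ 2αK^(n+3)/|k|` for all `ℓ ∈ 𝒢ⁿ_K \ ℤk` (here `n = m+1 ≥ 2`). -/
theorem nonresonance_on_normal_set (m : ℕ) (hm : 1 ≤ m)
    (γ L α K C : ℝ) (hγ : 0 < γ) (hL : 0 < L) (hα : 0 < α) (hK : 1 ≤ K)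
    (hC : 2 * ((m + 1 : ℕ) : ℝ) * L / γ ≤ C)
    (k : Fin (m + 1) → ℤ) (hkgcd : Finset.univ.gcd k = 1)
    (A : Matrix (Fin (m + 1)) (Fin (m + 1)) ℤ) (hdet : A.det = 1)
    (hrow : ∀ j, A 0 j = k j)
    (hmax : (Finset.univ.sup fun p : Fin (m + 1) × Fin (m + 1) => (A p.1 p.2).natAbs) =
      normInfN k)
    (ω : EuclideanSpace ℝ (Fin (m + 1)) → EuclideanSpace ℝ (Fin (m + 1)))
    (hω : ∀ y y' : EuclideanSpace ℝ (Fin (m + 1)), ‖ω y - ω y'‖ ≤ L * ‖y - y'‖)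
    (Dh : Set (EuclideanSpace ℝ (Fin m)))
    (η : ℝ → EuclideanSpace ℝ (Fin m) → ℝ)
    (hη : ∀ ϖ ϖ' : ℝ, |ϖ| ≤ α / C → |ϖ'| ≤ α / C → ∀ vh ∈ Dh,
      |η ϖ vh - η ϖ' vh| ≤ |ϖ - ϖ'| / (γ * ‖castZ k‖ ^ 2))
    (hcover : ∀ vh ∈ Dh, ∃ z₁ : ℝ,
      η (-(α / C)) vh ≤ z₁ ∧ z₁ ≤ η (α / C) vh ∧ mkE z₁ vh ∈ Dk ω A k α C K) :
    ∀ vh ∈ Dh, ∀ v₁ : ℝ, η (-(α / C)) vh ≤ v₁ → v₁ ≤ η (α / C) vh →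
      ∀ l : Fin (m + 1) → ℤ, GnK K l → ¬ inZk k l →
        2 * α * K ^ (m + 1 + 3) / ‖castZ k‖ ≤
          |⟪projPerp (castZ k)
              (ω (mulVecE ((A.map ((↑) : ℤ → ℝ))ᵀ) (mkE v₁ vh))), castZ l⟫| := by
  intro vh hvh v₁ h1 h2 l hlG hlZ
  obtain ⟨z₁, hz1, hz2, hzmem⟩ := hcover vh hvh
  simp only [Dk, Set.mem_setOf_eq] at hzmem
  have hzb := hzmem.2 l hlG hlZ
  have hn2 : (2:ℝ) ≤ ((m + 1 : ℕ) : ℝ) := by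
    have : (2:ℕ) ≤ m + 1 := by omega
    exact_mod_cast this
  have hCpos : (0:ℝ) < C := lt_of_lt_of_le (by positivity) hC
  -- k is nonzero
  have hki : ∃ i, k i ≠ 0 := by
    by_contra h
    push_neg at h
    have : Finset.univ.gcd k = 0 := Finset.gcd_eq_zero_iff.mpr fun i _ => h i
    simp [this] at hkgcd
  obtain ⟨i0, hi0⟩ := hki
  have hkE : castZ k ≠ 0 := by
    intro h
    apply hi0
    have := congrArg (fun v => v i0) h
    simpa [castZ] using this
  have hN : (0:ℝ) < ‖castZ k‖ := norm_pos_iff.mpr hkE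
  set N := ‖castZ k‖ with hNdef
  set X := K ^ (m + 1 + 3) with hXdef
  -- bound on |v₁ - z₁|
  have haC : (0:ℝ) ≤ α / C := by positivity
  have hηb := hη (α/C) (-(α/C)) (by rw [abs_of_nonneg haC])
    (by rw [abs_neg, abs_of_nonneg haC]) vh hvh
  have hD : |v₁ - z₁| ≤ (2*α/C) / (γ*N^2) := by
    have h3 : |α/C - -(α/C)| = 2*α/C := by
      rw [sub_neg_eq_add, abs_of_nonneg (by positivity)]; ring
    have hb' : η (α/C) vh - η (-(α/C)) vh ≤ (2*α/C) / (γ*N^2) := by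
      calc η (α/C) vh - η (-(α/C)) vh ≤ |η (α/C) vh - η (-(α/C)) vh| := le_abs_self _
        _ ≤ |α/C - -(α/C)| / (γ*N^2) := hηb
        _ = (2*α/C)/(γ*N^2) := by rw [h3]
    have habs : |v₁ - z₁| ≤ η (α/C) vh - η (-(α/C)) vh :=
      abs_sub_le_iff.mpr ⟨by linarith, by linarith⟩
    linarith
  -- the difference of the images
  have hwz : mulVecE ((A.map ((↑) : ℤ → ℝ))ᵀ) (mkE v₁ vh)
      - mulVecE ((A.map ((↑) : ℤ → ℝ))ᵀ) (mkE z₁ vh) = (v₁ - z₁) • castZ k := by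
    ext i
    simp only [mulVecE, PiLp.sub_apply, PiLp.smul_apply, smul_eq_mul, castZ, PiLp.toLp_apply]
    rw [← Finset.sum_sub_distrib]
    have hterm : ∀ j, ((A.map ((↑) : ℤ → ℝ))ᵀ) i j * mkE v₁ vh j
        - ((A.map ((↑) : ℤ → ℝ))ᵀ) i j * mkE z₁ vh j
        = ((A.map ((↑) : ℤ → ℝ))ᵀ) i j * (mkE v₁ vh j - mkE z₁ vh j) := fun j => by ring
    simp_rw [hterm]
    rw [Fin.sum_univ_succ]
    have h0 : ∀ j : Fin m, mkE v₁ vh j.succ - mkE z₁ vh j.succ = 0 := by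
      intro j; simp [mkE]
    simp only [h0, mul_zero, Finset.sum_const_zero, add_zero]
    have hv0 : mkE v₁ vh 0 = v₁ := by simp [mkE]
    have hz0 : mkE z₁ vh 0 = z₁ := by simp [mkE]
    have hA0 : ((A.map ((↑) : ℤ → ℝ))ᵀ) i 0 = (k i : ℝ) := by
      simp [Matrix.transpose_apply, Matrix.map_apply, hrow i]
    rw [hv0, hz0, hA0]; ring
  have hwnorm : ‖ω (mulVecE ((A.map ((↑) : ℤ → ℝ))ᵀ) (mkE v₁ vh))
      - ω (mulVecE ((A.map ((↑) : ℤ → ℝ))ᵀ) (mkE z₁ vh))‖ ≤ L * (|v₁ - z₁| * N) := by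
    calc ‖ω (mulVecE ((A.map ((↑) : ℤ → ℝ))ᵀ) (mkE v₁ vh))
        - ω (mulVecE ((A.map ((↑) : ℤ → ℝ))ᵀ) (mkE z₁ vh))‖
        ≤ L * ‖mulVecE ((A.map ((↑) : ℤ → ℝ))ᵀ) (mkE v₁ vh)
            - mulVecE ((A.map ((↑) : ℤ → ℝ))ᵀ) (mkE z₁ vh)‖ := hω _ _
      _ = L * (|v₁ - z₁| * N) := by rw [hwz, norm_smul, Real.norm_eq_abs]
  set a := ⟪projPerp (castZ k)
      (ω (mulVecE ((A.map ((↑) : ℤ → ℝ))ᵀ) (mkE v₁ vh))), castZ l⟫ with hadef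
  set b := ⟪projPerp (castZ k)
      (ω (mulVecE ((A.map ((↑) : ℤ → ℝ))ᵀ) (mkE z₁ vh))), castZ l⟫ with hbdef
  have hl : ‖castZ l‖ ≤ K := le_trans (norm_castZ_le_normOne l) hlG.2
  have hinner : |a - b| ≤ L * (|v₁ - z₁| * N) * K := by
    rw [hadef, hbdef, ← inner_sub_left, projPerp_sub]
    calc |⟪projPerp (castZ k) (ω (mulVecE ((A.map ((↑) : ℤ → ℝ))ᵀ) (mkE v₁ vh))
          - ω (mulVecE ((A.map ((↑) : ℤ → ℝ))ᵀ) (mkE z₁ vh))), castZ l⟫|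
        ≤ ‖projPerp (castZ k) (ω (mulVecE ((A.map ((↑) : ℤ → ℝ))ᵀ) (mkE v₁ vh))
          - ω (mulVecE ((A.map ((↑) : ℤ → ℝ))ᵀ) (mkE z₁ vh)))‖ * ‖castZ l‖ :=
          abs_real_inner_le_norm _ _
      _ ≤ (L * (|v₁ - z₁| * N)) * K :=
          mul_le_mul (le_trans (norm_projPerp_le _ _) hwnorm) hl (norm_nonneg _)
            (by positivity)
  -- the quantitative bound on the perturbation
  have key : 2*L ≤ C*γ := by
    have h4 : 2 * ((m + 1 : ℕ) : ℝ) * L ≤ C * γ := by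
      have := (div_le_iff₀ hγ).mp hC
      linarith
    nlinarith
  have hKX : K ≤ X := by
    rw [hXdef]
    exact le_self_pow₀ (by linarith) (by omega)
  have hΔ : L * (|v₁ - z₁| * N) * K ≤ α * X / N := by
    have hstep : L * (|v₁ - z₁| * N) * K ≤ L * ((2*α/C) / (γ*N^2) * N) * K := by
      gcongr
    have heq : L * ((2*α/C) / (γ*N^2) * N) * K = 2*α*L*K/(C*γ*N) := by
      field_simp
    have hfin : 2*α*L*K/(C*γ*N) ≤ α * X / N := by
      rw [div_le_div_iff₀ (by positivity) hN]
      have hp : α*N*(2*L*K) ≤ α*N*(C*γ*X) :=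
        mul_le_mul_of_nonneg_left
          (mul_le_mul key hKX (by positivity) (by positivity)) (by positivity)
      linarith [hp]
    rw [heq] at hstep
    linarith
  have h5 : |b| - |a| ≤ L * (|v₁ - z₁| * N) * K :=
    le_trans (le_trans (abs_sub_abs_le_abs_sub b a) (le_of_eq (abs_sub_comm b a))) hinner
  have hXN : 2*α*X/N = 3*α*X/N - α*X/N := by ring
  rw [hXN]
  linarith [hzb, hΔ, h5]
end
end

section
/- Let n ≥ 2 be an integer and let k ∈ ℤⁿ be a vector whose components have greatest common divisor 1. Then there exists a matrix A ∈ SL(n, ℤ) (an n×n integer matrix with determinant 1) whose first row equals k, such that max_{i,j}|A_{ij}| = |k|_∞, every entry of the submatrix formed by the last n−1 rows of A has absolute value at most |k|_∞, and the inverse matrix satisfies max_{i,j}|(A^{-1})_{ij}| ≤ (n−1)^{(n−1)/2}·|k|_∞^{n−1}. -/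
open Matrix

noncomputable section

lemma gcd_univ_succ {n : ℕ} (f : Fin (n + 1) → ℤ) :
    Finset.univ.gcd f = GCDMonoid.gcd (f 0) (Finset.univ.gcd fun i : Fin n => f i.succ) := by
  rw [Fin.univ_succ, Finset.cons_eq_insert, Finset.gcd_insert, Finset.map_eq_image,
    Finset.gcd_image]
  rfl

lemma bezout_bounded (a g : ℤ) (hg : 1 ≤ g) (h : Int.gcd a g = 1) :
    ∃ u v : ℤ, u * a + v * g = 1 ∧ 0 ≤ u ∧ u ≤ g ∧ |v| ≤ max |a| 1 := by
  have key : (1 : ℤ) = a * Int.gcdA a g + g * Int.gcdB a g := by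
    have := Int.gcd_eq_gcd_ab a g
    rw [h] at this
    exact_mod_cast this
  set u := Int.gcdA a g % g with hu
  have hu0 : 0 ≤ u := Int.emod_nonneg _ (by omega)
  have hu1 : u < g := Int.emod_lt_of_pos _ (by omega)
  have hdvd : g ∣ 1 - u * a := by
    refine ⟨Int.gcdB a g + (Int.gcdA a g / g) * a, ?_⟩
    rw [hu, Int.emod_def]
    linear_combination key
  set v := (1 - u * a) / g with hv
  have hvg : v * g = 1 - u * a := Int.ediv_mul_cancel hdvd
  refine ⟨u, v, by linarith, hu0, le_of_lt hu1, ?_⟩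
  have h1 : |1 - u * a| ≤ 1 + u * |a| := by
    calc |1 - u * a| ≤ |(1 : ℤ)| + |u * a| := abs_sub _ _
      _ = 1 + u * |a| := by rw [abs_one, abs_mul, abs_of_nonneg hu0]
  have hm1 : |a| ≤ max |a| 1 := le_max_left _ _
  have hm2 : (1 : ℤ) ≤ max |a| 1 := le_max_right _ _
  have h2 : 1 + u * |a| ≤ g * max |a| 1 := by nlinarith [abs_nonneg a]
  have h3 : |v| * g = |1 - u * a| := by
    rw [← abs_of_nonneg (show (0:ℤ) ≤ g by omega), ← abs_mul, hvg]
  nlinarith [abs_nonneg v]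

lemma key_lemma (K : ℕ) (hK : 1 ≤ K) :
    ∀ s : ℕ, ∀ w : Fin (s + 1) → ℤ, Finset.univ.gcd w = 1 → (∀ i, |w i| ≤ (K : ℤ)) →
    ∃ M N : Matrix (Fin (s + 1)) (Fin (s + 1)) ℤ,
      M * N = 1 ∧ N * M = 1 ∧ (∀ j, M 0 j = w j) ∧
      (∀ i j, |M i j| ≤ (K : ℤ)) ∧ (∀ i j, |N i j| ≤ (K : ℤ) ^ s) := by
  intro s
  induction s with
  | zero =>
    intro w hg hb
    have h1 : Finset.univ.gcd w = normalize (w 0) := by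
      rw [show (Finset.univ : Finset (Fin 1)) = {0} from rfl, Finset.gcd_singleton]
    have habs : |w 0| = 1 := by rw [Int.abs_eq_normalize, ← h1, hg]
    have hww : w 0 * w 0 = 1 := by
      rcases abs_eq (by norm_num : (0:ℤ) ≤ 1) |>.mp habs with h | h <;> rw [h] <;> ring
    refine ⟨Matrix.of fun _ _ => w 0, Matrix.of fun _ _ => w 0, ?_, ?_, ?_, ?_, ?_⟩
    · ext i j
      rw [Fin.fin_one_eq_zero i, Fin.fin_one_eq_zero j]
      simp [Matrix.mul_apply, Matrix.one_apply, hww]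
    · ext i j
      rw [Fin.fin_one_eq_zero i, Fin.fin_one_eq_zero j]
      simp [Matrix.mul_apply, Matrix.one_apply, hww]
    · intro j
      rw [Fin.fin_one_eq_zero j]
      rfl
    · intro i j; exact le_trans (le_of_eq habs) (by exact_mod_cast hK)
    · intro i j; simp [habs]
  | succ s IH =>
    intro w hgcd hb
    have hsplit : Finset.univ.gcd w
        = GCDMonoid.gcd (w 0) (Finset.univ.gcd fun i : Fin (s + 1) => w i.succ) :=
      gcd_univ_succ w
    set g : ℤ := Finset.univ.gcd (fun i : Fin (s + 1) => w i.succ) with hgdef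
    have habsg : |g| = g := by rw [Int.abs_eq_normalize]; exact Finset.normalize_gcd
    have hgnn : 0 ≤ g := habsg ▸ abs_nonneg g
    have hK1 : (1 : ℤ) ≤ (K : ℤ) := by exact_mod_cast hK
    by_cases hg0 : g = 0
    · -- tail is zero
      have htz : ∀ i : Fin (s + 1), w i.succ = 0 := fun i =>
        Finset.gcd_eq_zero_iff.1 hg0 i (Finset.mem_univ i)
      have habs : |w 0| = 1 := by
        rw [hsplit, hg0, gcd_zero_right] at hgcd
        rw [Int.abs_eq_normalize, hgcd]
      have hww : w 0 * w 0 = 1 := by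
        rcases abs_eq (by norm_num : (0:ℤ) ≤ 1) |>.mp habs with h | h <;> rw [h] <;> ring
      refine ⟨w 0 • 1, w 0 • 1, ?_, ?_, ?_, ?_, ?_⟩
      · rw [smul_mul_assoc, mul_smul_comm, smul_smul, hww, one_smul, one_mul]
      · rw [smul_mul_assoc, mul_smul_comm, smul_smul, hww, one_smul, one_mul]
      · intro j
        refine Fin.cases ?_ (fun j => ?_) j
        · simp [Matrix.one_apply]
        · simp [Matrix.one_apply, (Fin.succ_ne_zero j).symm, htz j]
      · intro i j
        simp only [Matrix.smul_apply, Matrix.one_apply, smul_eq_mul]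
        split_ifs <;> simp [habs] <;> linarith
      · intro i j
        have h1 : (1 : ℤ) ≤ (K : ℤ) ^ (s + 1) := one_le_pow₀ hK1
        simp only [Matrix.smul_apply, Matrix.one_apply, smul_eq_mul]
        split_ifs <;> simp [habs] <;> linarith
    · have hg1 : 1 ≤ g := by omega
      obtain ⟨i0, hi0⟩ : ∃ i : Fin (s + 1), w i.succ ≠ 0 := by
        by_contra hcon
        push_neg at hcon
        exact hg0 (Finset.gcd_eq_zero_iff.2 fun x _ => hcon x)
      have hgK : g ≤ (K : ℤ) := by
        have hd : g ∣ |w i0.succ| := (dvd_abs _ _).2 (Finset.gcd_dvd (Finset.mem_univ i0))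
        exact le_trans (Int.le_of_dvd (abs_pos.2 hi0) hd) (hb i0.succ)
      set w'' : Fin (s + 1) → ℤ := fun i => w i.succ / g with hw''
      have hmul : ∀ i, g * w'' i = w i.succ := fun i =>
        Int.mul_ediv_cancel' (Finset.gcd_dvd (Finset.mem_univ i))
      have hgcd'' : Finset.univ.gcd w'' = 1 := Finset.gcd_div_eq_one (Finset.mem_univ i0) hi0
      have hb'' : ∀ i, |w'' i| ≤ (K : ℤ) := by
        intro i
        calc |w'' i| ≤ g * |w'' i| := le_mul_of_one_le_left (abs_nonneg _) hg1
          _ = |g * w'' i| := by rw [abs_mul, abs_of_nonneg hgnn]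
          _ = |w i.succ| := by rw [hmul]
          _ ≤ (K : ℤ) := hb i.succ
      obtain ⟨M', N', hMN', hNM', hrow', hM', hN'⟩ := IH w'' hgcd'' hb''
      have hcop : Int.gcd (w 0) g = 1 := by
        rw [hsplit] at hgcd
        have := Int.coe_gcd (w 0) g
        rw [hgcd] at this
        exact_mod_cast this
      obtain ⟨u, v, huv, hu0, hug, hv⟩ := bezout_bounded (w 0) g hg1 hcop
      have hvK : |v| ≤ (K : ℤ) := le_trans hv (max_le (hb 0) hK1)
      -- the matrices
      set M : Matrix (Fin (s + 2)) (Fin (s + 2)) ℤ :=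
        Matrix.of (Fin.cons w (Fin.cons (Fin.cons (-v) fun j => u * w'' j)
          (fun i : Fin s => Fin.cons 0 (fun j => M' i.succ j)))) with hM
      set N : Matrix (Fin (s + 2)) (Fin (s + 2)) ℤ :=
        Matrix.of (Fin.cons (Fin.cons u (Fin.cons (-g) (fun _ : Fin s => 0)))
          (fun i : Fin (s + 1) => Fin.cons (N' i 0 * v)
            (Fin.cons (N' i 0 * w 0) (fun j : Fin s => N' i j.succ)))) with hN
      have hMN : ∀ a b, (∑ l, M' a l * N' l b) = if a = b then 1 else 0 := by
        intro a b
        rw [← Matrix.mul_apply, hMN', Matrix.one_apply]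
      have hNM : ∀ a b, (∑ l, N' a l * M' l b) = if a = b then 1 else 0 := by
        intro a b
        rw [← Matrix.mul_apply, hNM', Matrix.one_apply]
      have hsum0 : ∀ b, (∑ l, w'' l * N' l b) = if (0 : Fin (s + 1)) = b then 1 else 0 := by
        intro b
        have := hMN 0 b
        simp only [hrow'] at this
        exact this
      refine ⟨M, N, ?_, ?_, ?_, ?_, ?_⟩
      · -- M * N = 1
        ext i j
        rw [Matrix.mul_apply, Fin.sum_univ_succ, Matrix.one_apply]
        refine Fin.cases ?_ (fun i => Fin.cases ?_ (fun i => ?_) i) i <;>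
          refine Fin.cases ?_ (fun j => Fin.cases ?_ (fun j => ?_) j) j <;>
          simp only [hM, hN, Matrix.of_apply, Fin.cons_zero, Fin.cons_succ]
        -- i = 0
        · -- j = 0
          have e : (∑ l : Fin (s+1), w l.succ * (N' l 0 * v))
              = g * v * ∑ l, w'' l * N' l 0 := by
            rw [Finset.mul_sum]
            exact Finset.sum_congr rfl fun l _ => by rw [← hmul l]; ring
          rw [e, hsum0 0]
          simp
          linarith [huv]
        · -- j = 1
          have e : (∑ l : Fin (s+1), w l.succ * (N' l 0 * w 0))
              = g * w 0 * ∑ l, w'' l * N' l 0 := by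
            rw [Finset.mul_sum]
            exact Finset.sum_congr rfl fun l _ => by rw [← hmul l]; ring
          rw [e, hsum0 0]
          rw [if_neg ((Fin.succ_ne_zero (0 : Fin (s+1))).symm)]
          simp
          ring
        · -- j = j'.succ.succ
          have e : (∑ l : Fin (s+1), w l.succ * N' l j.succ)
              = g * ∑ l, w'' l * N' l j.succ := by
            rw [Finset.mul_sum]
            exact Finset.sum_congr rfl fun l _ => by rw [← hmul l]; ring
          rw [e, hsum0 j.succ]
          rw [if_neg ((Fin.succ_ne_zero (j.succ : Fin (s+1))).symm : (0 : Fin (s+2)) ≠ _)]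
          rw [if_neg ((Fin.succ_ne_zero j).symm)]
          ring
        -- i = 1
        · have e : (∑ l : Fin (s+1), u * w'' l * (N' l 0 * v))
              = u * v * ∑ l, w'' l * N' l 0 := by
            rw [Finset.mul_sum]
            exact Finset.sum_congr rfl fun l _ => by ring
          rw [e, hsum0 0]
          rw [if_neg (Fin.succ_ne_zero (0 : Fin (s+1)))]
          simp
          ring
        · have e : (∑ l : Fin (s+1), u * w'' l * (N' l 0 * w 0))
              = u * w 0 * ∑ l, w'' l * N' l 0 := by
            rw [Finset.mul_sum]
            exact Finset.sum_congr rfl fun l _ => by ring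
          rw [e, hsum0 0]
          simp
          linarith [huv]
        · have e : (∑ l : Fin (s+1), u * w'' l * N' l j.succ)
              = u * ∑ l, w'' l * N' l j.succ := by
            rw [Finset.mul_sum]
            exact Finset.sum_congr rfl fun l _ => by ring
          rw [e, hsum0 j.succ]
          rw [if_neg ((Fin.succ_ne_zero j).symm)]
          rw [if_neg (show (Fin.succ 0 : Fin (s+2)) ≠ j.succ.succ from
            fun h => Fin.succ_ne_zero j ((Fin.succ_injective _ h).symm))]
          ring
        -- i = i'.succ.succ
        · have e : (∑ l : Fin (s+1), M' i.succ l * (N' l 0 * v))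
              = v * ∑ l, M' i.succ l * N' l 0 := by
            rw [Finset.mul_sum]
            exact Finset.sum_congr rfl fun l _ => by ring
          rw [e, hMN i.succ 0]
          rw [if_neg (Fin.succ_ne_zero i.succ)]
          rw [if_neg (Fin.succ_ne_zero i)]
          ring
        · have e : (∑ l : Fin (s+1), M' i.succ l * (N' l 0 * w 0))
              = w 0 * ∑ l, M' i.succ l * N' l 0 := by
            rw [Finset.mul_sum]
            exact Finset.sum_congr rfl fun l _ => by ring
          rw [e, hMN i.succ 0]
          rw [if_neg (show (i.succ.succ : Fin (s+2)) ≠ Fin.succ 0 from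
            fun h => Fin.succ_ne_zero i (Fin.succ_injective _ h))]
          rw [if_neg (Fin.succ_ne_zero i)]
          ring
        · rw [hMN i.succ j.succ]
          by_cases h : i.succ = j.succ
          · rw [if_pos h, if_pos (congrArg Fin.succ h)]; ring
          · rw [if_neg h, if_neg (fun hh => h (Fin.succ_injective _ hh))]; ring
      · -- N * M = 1
        ext i j
        rw [Matrix.mul_apply, Fin.sum_univ_succ, Fin.sum_univ_succ, Matrix.one_apply]
        refine Fin.cases ?_ (fun i => ?_) i <;>
          refine Fin.cases ?_ (fun j => ?_) j <;>
          simp only [hM, hN, Matrix.of_apply, Fin.cons_zero, Fin.cons_succ, mul_zero,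
            zero_mul, Finset.sum_const_zero, add_zero]
        · -- i = 0, j = 0
          simp only [if_true, eq_self_iff_true, if_pos]
          linarith [huv]
        · -- i = 0, j = j'.succ
          rw [if_neg ((Fin.succ_ne_zero j).symm)]
          refine Fin.cases ?_ (fun j' => ?_) j
          · try simp only [Fin.cons_zero, Fin.cons_succ, mul_zero, zero_mul,
              Finset.sum_const_zero, add_zero]
            rw [← hmul 0]; ring
          · try simp only [Fin.cons_zero, Fin.cons_succ, mul_zero, zero_mul,
              Finset.sum_const_zero, add_zero]
            rw [← hmul j'.succ]; ring
        · -- i = i'.succ, j = 0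
          rw [if_neg (Fin.succ_ne_zero i)]
          ring
        · -- i = i'.succ, j = j'.succ
          have hs := hNM i j
          rw [Fin.sum_univ_succ, hrow'] at hs
          rw [← hmul j]
          by_cases h : i = j
          · rw [if_pos h] at hs
            rw [if_pos (congrArg Fin.succ h)]
            linear_combination hs + N' i 0 * w'' j * huv
          · rw [if_neg h] at hs
            rw [if_neg (fun hh => h (Fin.succ_injective _ hh))]
            linear_combination hs + N' i 0 * w'' j * huv
      · -- first row
        intro j
        simp [hM]
      · -- entries of M
        intro i j
        refine Fin.cases ?_ (fun i => Fin.cases ?_ (fun i => ?_) i) i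
        · simpa [hM] using hb j
        · refine Fin.cases ?_ (fun j => ?_) j
          · simpa [hM] using hvK
          · simp only [hM, Matrix.of_apply, Fin.cons_succ, Fin.cons_zero]
            have h1 : |u| ≤ g := by rw [abs_of_nonneg hu0]; exact hug
            calc |u * w'' j| = |u| * |w'' j| := abs_mul _ _
              _ ≤ g * |w'' j| := mul_le_mul_of_nonneg_right h1 (abs_nonneg _)
              _ = |g * w'' j| := by rw [abs_mul, abs_of_nonneg hgnn]
              _ = |w j.succ| := by rw [hmul]
              _ ≤ (K : ℤ) := hb j.succ
        · refine Fin.cases ?_ (fun j => ?_) j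
          · simp only [hM, Matrix.of_apply, Fin.cons_succ, Fin.cons_zero]
            simpa using le_trans zero_le_one hK1
          · simpa [hM] using hM' i.succ j
      · -- entries of N
        intro i j
        have hKs : (K : ℤ) ^ s ≤ (K : ℤ) ^ (s + 1) := pow_le_pow_right₀ hK1 (by omega)
        have hKK : (K : ℤ) ≤ (K : ℤ) ^ (s + 1) := by
          calc (K : ℤ) = (K : ℤ) ^ 1 := (pow_one _).symm
            _ ≤ (K : ℤ) ^ (s + 1) := pow_le_pow_right₀ hK1 (by omega)
        have hpow : (K : ℤ) ^ (s + 1) = (K : ℤ) ^ s * K := pow_succ _ _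
        refine Fin.cases ?_ (fun i => ?_) i
        · refine Fin.cases ?_ (fun j => Fin.cases ?_ (fun j => ?_) j) j
          · simp only [hN, Matrix.of_apply, Fin.cons_zero]
            rw [abs_of_nonneg hu0]; exact le_trans hug (le_trans hgK hKK)
          · simp only [hN, Matrix.of_apply, Fin.cons_zero, Fin.cons_succ]
            rw [abs_neg, abs_of_nonneg hgnn]; exact le_trans hgK hKK
          · simp only [hN, Matrix.of_apply, Fin.cons_zero, Fin.cons_succ]
            simpa using le_trans zero_le_one (le_trans hK1 hKK)
        · refine Fin.cases ?_ (fun j => Fin.cases ?_ (fun j => ?_) j) j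
          · simp only [hN, Matrix.of_apply, Fin.cons_zero, Fin.cons_succ]
            rw [hpow, abs_mul]
            exact mul_le_mul (hN' i 0) hvK (abs_nonneg _) (by positivity)
          · simp only [hN, Matrix.of_apply, Fin.cons_zero, Fin.cons_succ]
            rw [hpow, abs_mul]
            exact mul_le_mul (hN' i 0) (hb 0) (abs_nonneg _) (by positivity)
          · simp only [hN, Matrix.of_apply, Fin.cons_succ]
            exact le_trans (hN' i j.succ) hKs

/-- For every `k ∈ ℤⁿ` (`n = m + 2 ≥ 2`) with coprime components there is a
matrix `A ∈ SL(n, ℤ)` whose first row is `k`, whose entries have max-norm exactly `|k|_∞`,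
whose last `n − 1` rows have entries bounded by `|k|_∞`, and whose inverse satisfies
`max_{i,j} |(A⁻¹)_{ij}| ≤ (n−1)^((n−1)/2) |k|_∞^(n−1)`. -/
theorem exists_sl_matrix_first_row (m : ℕ) (k : Fin (m + 2) → ℤ)
    (hgcd : Finset.univ.gcd k = 1) :
    ∃ A : Matrix (Fin (m + 2)) (Fin (m + 2)) ℤ,
      A.det = 1 ∧
      (∀ j, A 0 j = k j) ∧
      (Finset.univ.sup fun p : Fin (m + 2) × Fin (m + 2) => (A p.1 p.2).natAbs) =
        normInfN k ∧
      (∀ i : Fin (m + 2), i ≠ 0 → ∀ j, (A i j).natAbs ≤ normInfN k) ∧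
      (∀ i j, |((A⁻¹ i j : ℤ) : ℝ)| ≤
        ((m + 1 : ℕ) : ℝ) ^ (((m + 1 : ℕ) : ℝ) / 2) * ((normInfN k : ℕ) : ℝ) ^ (m + 1)) := by
  classical
  set K : ℕ := normInfN k with hKdef
  obtain ⟨i0, hi0⟩ : ∃ i : Fin (m + 2), k i ≠ 0 := by
    by_contra hcon
    push_neg at hcon
    rw [Finset.gcd_eq_zero_iff.2 fun x _ => hcon x] at hgcd
    exact absurd hgcd (by norm_num)
  have hKsup : K = Finset.univ.sup fun i => (k i).natAbs := rfl
  have hK : 1 ≤ K := le_trans (Nat.one_le_iff_ne_zero.2 (Int.natAbs_ne_zero.2 hi0))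
    (hKsup ▸ Finset.le_sup (f := fun i => (k i).natAbs) (Finset.mem_univ i0))
  have hb : ∀ i, |k i| ≤ (K : ℤ) := by
    intro i
    have h1 : (k i).natAbs ≤ K :=
      hKsup ▸ Finset.le_sup (f := fun i => (k i).natAbs) (Finset.mem_univ i)
    rw [Int.abs_eq_natAbs]
    exact_mod_cast h1
  obtain ⟨M, N, hMN, hNM, hrow, hMb, hNb⟩ := key_lemma K hK (m + 1) k hgcd hb
  have hdet : M.det = 1 ∨ M.det = -1 :=
    Int.isUnit_iff.1 (IsUnit.of_mul_eq_one _ (by rw [← Matrix.det_mul, hMN, Matrix.det_one]))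
  have hdet2 : M.det * M.det = 1 := by rcases hdet with h | h <;> rw [h] <;> norm_num
  have habsdet : |M.det| = 1 := by rcases hdet with h | h <;> rw [h] <;> norm_num
  set d : Fin (m + 2) → ℤ := fun i => if i = Fin.last (m + 1) then M.det else 1 with hd
  have hdd : ∀ i, d i * d i = 1 := by
    intro i
    simp only [hd]
    split_ifs <;> simp [hdet2]
  have habsd : ∀ i, |d i| = 1 := by
    intro i
    simp only [hd]
    split_ifs <;> simp [habsdet]
  set E : Matrix (Fin (m + 2)) (Fin (m + 2)) ℤ := Matrix.diagonal d with hE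
  have hEE : E * E = 1 := by
    rw [hE, Matrix.diagonal_mul_diagonal]
    rw [show (fun i => d i * d i) = fun _ => (1 : ℤ) from funext fun i => hdd i]
    exact Matrix.diagonal_one
  set A : Matrix (Fin (m + 2)) (Fin (m + 2)) ℤ := E * M with hA
  set B : Matrix (Fin (m + 2)) (Fin (m + 2)) ℤ := N * E with hB
  have hAB : A * B = 1 := by
    rw [hA, hB, Matrix.mul_assoc E M (N * E), ← Matrix.mul_assoc M N E, hMN, Matrix.one_mul, hEE]
  have h0last : (0 : Fin (m + 2)) ≠ Fin.last (m + 1) := by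
    intro h
    have := congrArg Fin.val h
    simp [Fin.last] at this
  have hArow : ∀ j, A 0 j = k j := by
    intro j
    rw [hA, Matrix.diagonal_mul]
    simp only [hd, if_neg h0last, one_mul]
    exact hrow j
  have hAb : ∀ i j, |A i j| ≤ (K : ℤ) := by
    intro i j
    rw [hA, Matrix.diagonal_mul, abs_mul, habsd i, one_mul]
    exact hMb i j
  have hBb : ∀ i j, |B i j| ≤ (K : ℤ) ^ (m + 1) := by
    intro i j
    rw [hB, Matrix.mul_diagonal, abs_mul, habsd j, mul_one]
    exact hNb i j
  have hAinv : A⁻¹ = B := Matrix.inv_eq_right_inv hAB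
  refine ⟨A, ?_, hArow, ?_, ?_, ?_⟩
  · rw [hA, Matrix.det_mul, hE, Matrix.det_diagonal]
    rw [show (∏ i, d i) = M.det by
      rw [hd, Finset.prod_ite_eq' Finset.univ (Fin.last (m + 1)) fun _ => M.det]
      simp]
    exact hdet2
  · apply le_antisymm
    · apply Finset.sup_le
      intro p _
      have h := hAb p.1 p.2
      rw [Int.abs_eq_natAbs] at h
      exact_mod_cast h
    · apply Finset.sup_le
      intro i _
      calc (k i).natAbs = (A 0 i).natAbs := by rw [hArow i]
        _ ≤ _ := Finset.le_sup (f := fun p : Fin (m + 2) × Fin (m + 2) => (A p.1 p.2).natAbs)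
          (Finset.mem_univ ((0 : Fin (m + 2)), i))
  · intro i _ j
    have h := hAb i j
    rw [Int.abs_eq_natAbs] at h
    exact_mod_cast h
  · intro i j
    rw [hAinv]
    have h1 : |((B i j : ℤ) : ℝ)| ≤ ((K : ℝ)) ^ (m + 1) := by
      have := hBb i j
      calc |((B i j : ℤ) : ℝ)| = (((|B i j| : ℤ) : ℝ)) := by
            rw [Int.cast_abs]
        _ ≤ (((K : ℤ) ^ (m + 1) : ℤ) : ℝ) := by exact_mod_cast this
        _ = (K : ℝ) ^ (m + 1) := by push_cast; ring
    have h2 : (1 : ℝ) ≤ ((m + 1 : ℕ) : ℝ) ^ (((m + 1 : ℕ) : ℝ) / 2) :=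
      Real.one_le_rpow (by exact_mod_cast Nat.le_add_left 1 m) (by positivity)
    calc |((B i j : ℤ) : ℝ)| ≤ (K : ℝ) ^ (m + 1) := h1
      _ ≤ ((m + 1 : ℕ) : ℝ) ^ (((m + 1 : ℕ) : ℝ) / 2) * (K : ℝ) ^ (m + 1) :=
        le_mul_of_one_le_left (by positivity) h2
end
end

section
/- Let n ≥ 2 be an integer, let k, ℓ ∈ ℤⁿ be linearly independent integer vectors, and let α, M, K > 0 and 𝕮 ≥ 1 be real numbers. Then the Lebesgue measure of the set {w ∈ ℝⁿ : |w| < M, |w·k| < α/𝕮, |π_k^⊥w·ℓ| ≤ 3αK^{n+3}/|k|} is at most 3·2ⁿ·M^{n−2}·α²·K^{n+3}/|k|. -/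
open MeasureTheory Set ENNReal Metric
open scoped RealInnerProductSpace

noncomputable section

set_option maxHeartbeats 1000000

/-- For linearly independent integer vectors `k, ℓ ∈ ℤⁿ` (`n ≥ 2`) and reals
`α, M, K > 0`, `𝕮 ≥ 1`, the Lebesgue measure of
`{w ∈ ℝⁿ : |w| < M, |w·k| < α/𝕮, |π_k^⊥ w · ℓ| ≤ 3αK^(n+3)/|k|}` is at most
`3·2ⁿ·M^(n-2)·α²·K^(n+3)/|k|`. -/
theorem measure_Omega2_le (n : ℕ) (hn : 2 ≤ n) (k l : Fin n → ℤ)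
    (hkl : LinearIndependent ℝ ![castZ k, castZ l])
    (α M K C : ℝ) (hα : 0 < α) (hM : 0 < M) (hK : 0 < K) (hC : 1 ≤ C) :
    volume {w : EuclideanSpace ℝ (Fin n) |
        ‖w‖ < M ∧ |⟪w, castZ k⟫| < α / C ∧
        |⟪projPerp (castZ k) w, castZ l⟫| ≤ 3 * α * K ^ (n + 3) / ‖castZ k‖} ≤
      ENNReal.ofReal (3 * 2 ^ n * M ^ (n - 2) * α ^ 2 * K ^ (n + 3) / ‖castZ k‖) := by
  classical
  obtain ⟨m, rfl⟩ : ∃ m, n = m + 2 := ⟨n - 2, by omega⟩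
  set kv := castZ k with hkv
  set lv := castZ l with hlv
  have hk0 : kv ≠ 0 := by
    have h := hkl.ne_zero 0
    simpa using h
  have hkn : (0:ℝ) < ‖kv‖ := norm_pos_iff.mpr hk0
  set p := projPerp kv lv with hp
  obtain ⟨hl0, hnot⟩ := linearIndependent_fin2.mp hkl
  have hl0' : lv ≠ 0 := by simpa using hl0
  have hnot' : ∀ a : ℝ, a • lv ≠ kv := by
    intro a ha
    exact hnot a (by simpa using ha)
  have hp0 : p ≠ 0 := by
    intro h
    have hc : lv = (⟪lv, kv⟫ / ‖kv‖ ^ 2) • kv := by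
      rw [hp, projPerp, sub_eq_zero] at h
      exact h
    have hc0 : ⟪lv, kv⟫ / ‖kv‖ ^ 2 ≠ 0 := by
      intro h0
      apply hl0'
      rw [hc, h0, zero_smul]
    obtain ⟨q, hq, hq0⟩ : ∃ q : ℝ, lv = q • kv ∧ q ≠ 0 := ⟨_, hc, hc0⟩
    exact hnot' q⁻¹ (by rw [hq, smul_smul, inv_mul_cancel₀ hq0, one_smul])
  have hpn : (0:ℝ) < ‖p‖ := norm_pos_iff.mpr hp0
  have hkp : ⟪kv, p⟫ = 0 := by
    rw [hp, projPerp, inner_sub_right, real_inner_smul_right, real_inner_self_eq_norm_sq,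
      real_inner_comm kv lv]
    field_simp
    ring
  have hadj : ∀ w : EuclideanSpace ℝ (Fin (m + 2)), ⟪projPerp kv w, lv⟫ = ⟪w, p⟫ := by
    intro w
    rw [projPerp, hp, projPerp, inner_sub_left, inner_sub_right, real_inner_smul_left,
      real_inner_smul_right, real_inner_comm kv lv]
    ring
  have hGr : ‖kv‖ ^ 2 * ‖p‖ ^ 2 = ‖kv‖ ^ 2 * ‖lv‖ ^ 2 - ⟪lv, kv⟫ ^ 2 := by
    have h1 : ‖p‖ ^ 2 = ⟪p, p⟫ := (real_inner_self_eq_norm_sq p).symm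
    rw [h1, hp, projPerp, inner_sub_left, inner_sub_right, inner_sub_right,
      real_inner_smul_left, real_inner_smul_right, real_inner_smul_left,
      real_inner_smul_right, real_inner_self_eq_norm_sq, real_inner_self_eq_norm_sq,
      real_inner_comm kv lv]
    field_simp
    ring
  have hG1 : (1:ℝ) ≤ ‖kv‖ ^ 2 * ‖lv‖ ^ 2 - ⟪lv, kv⟫ ^ 2 := by
    have e1 : ‖kv‖ ^ 2 = ((∑ i, (k i) ^ 2 : ℤ) : ℝ) := by
      rw [← real_inner_self_eq_norm_sq]
      rw [PiLp.inner_apply]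
      simp [hkv, castZ, sq]
    have e2 : ‖lv‖ ^ 2 = ((∑ i, (l i) ^ 2 : ℤ) : ℝ) := by
      rw [← real_inner_self_eq_norm_sq]
      rw [PiLp.inner_apply]
      simp [hlv, castZ, sq]
    have e3 : ⟪lv, kv⟫ = ((∑ i, (l i) * (k i) : ℤ) : ℝ) := by
      simp [PiLp.inner_apply, hkv, hlv, castZ]
      exact Finset.sum_congr rfl fun i _ => mul_comm _ _
    set G : ℤ := (∑ i, (k i) ^ 2) * (∑ i, (l i) ^ 2) - (∑ i, (l i) * (k i)) ^ 2 with hGdef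
    have hGc : (G : ℝ) = ‖kv‖ ^ 2 * ‖lv‖ ^ 2 - ⟪lv, kv⟫ ^ 2 := by
      rw [e1, e2, e3]
      push_cast [hGdef]
      ring
    have hGpos : (0:ℝ) < (G : ℝ) := by
      rw [hGc, ← hGr]
      positivity
    have : (1:ℤ) ≤ G := by exact_mod_cast hGpos
    rw [← hGc]
    exact_mod_cast this
  have hkpge : 1 ≤ ‖kv‖ * ‖p‖ := by
    have hx2 : 1 ≤ (‖kv‖ * ‖p‖) ^ 2 := by
      rw [mul_pow]
      linarith [hGr, hG1]
    nlinarith [hx2, mul_nonneg (norm_nonneg kv) (norm_nonneg p)]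
  -- construct an orthonormal basis whose first two vectors are kv/‖kv‖ and p/‖p‖
  have h01 : (0 : Fin (m + 2)) ≠ 1 := by simp [Fin.ext_iff]
  set v : Fin (m + 2) → EuclideanSpace ℝ (Fin (m + 2)) :=
    fun i => if i = 0 then ‖kv‖⁻¹ • kv else ‖p‖⁻¹ • p with hv
  have hon : Orthonormal ℝ (({0, 1} : Set (Fin (m + 2))).restrict v) := by
    constructor
    · rintro ⟨i, hi⟩
      simp only [Set.restrict, Set.restrict_apply, hv]
      rcases (by simpa using hi : i = 0 ∨ i = 1) with h | h
      · rw [if_pos h, norm_smul, norm_inv, norm_norm, inv_mul_cancel₀ hkn.ne']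
      · rw [if_neg (h ▸ h01.symm), norm_smul, norm_inv, norm_norm, inv_mul_cancel₀ hpn.ne']
    · rintro ⟨i, hi⟩ ⟨j, hj⟩ hij
      have hij' : i ≠ j := fun h => hij (Subtype.ext h)
      simp only [Set.restrict, Set.restrict_apply, hv]
      rcases (by simpa using hi : i = 0 ∨ i = 1) with h | h <;>
        rcases (by simpa using hj : j = 0 ∨ j = 1) with h' | h'
      · exact absurd (h.trans h'.symm) hij'
      · rw [if_pos h, if_neg (h' ▸ h01.symm), real_inner_smul_left, real_inner_smul_right, hkp]
        ring
      · rw [if_neg (h ▸ h01.symm), if_pos h', real_inner_smul_left, real_inner_smul_right,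
          real_inner_comm, hkp]
        ring
      · exact absurd (h.trans h'.symm) hij'
  have hcard : Module.finrank ℝ (EuclideanSpace ℝ (Fin (m + 2))) = Fintype.card (Fin (m + 2)) := by
    simp [finrank_euclideanSpace]
  obtain ⟨b, hb⟩ := hon.exists_orthonormalBasis_extension_of_card_eq hcard
  have hb0 : b 0 = ‖kv‖⁻¹ • kv := by
    rw [hb 0 (by simp), hv]
    simp
  have hb1 : b 1 = ‖p‖⁻¹ • p := by
    rw [hb 1 (by simp), hv]
    simp [h01.symm]
  set c : Fin (m + 2) → ℝ := fun i =>
    if i = 0 then α / ‖kv‖ else if i = 1 then 3 * α * K ^ (m + 2 + 3) / (‖kv‖ * ‖p‖) else M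
    with hc
  have hc0v : c 0 = α / ‖kv‖ := by simp [hc]
  have hc1v : c 1 = 3 * α * K ^ (m + 2 + 3) / (‖kv‖ * ‖p‖) := by
    rw [hc]
    simp [h01.symm]
  have hcnn : ∀ i, 0 ≤ c i := by
    intro i
    rw [hc]
    dsimp only
    split_ifs <;> positivity
  set T : Set (EuclideanSpace ℝ (Fin (m + 2))) := {x | ∀ i, x i ∈ Icc (-(c i)) (c i)} with hT
  have hTeq : T = (MeasurableEquiv.toLp 2 (Fin (m + 2) → ℝ)).symm ⁻¹'
      (Set.univ.pi fun i => Icc (-(c i)) (c i)) := by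
    ext x
    simp only [hT, mem_setOf_eq, mem_preimage, Set.mem_pi, Set.mem_univ, forall_true_left,
      MeasurableEquiv.coe_toLp_symm]
  have hTm : MeasurableSet T := by
    rw [hTeq]
    exact (MeasurableSet.univ_pi fun i => measurableSet_Icc).preimage
      (MeasurableEquiv.toLp 2 (Fin (m + 2) → ℝ)).symm.measurable
  -- the set is contained in the preimage of the box under b.repr
  have hsub : {w : EuclideanSpace ℝ (Fin (m + 2)) |
      ‖w‖ < M ∧ |⟪w, kv⟫| < α / C ∧
      |⟪projPerp kv w, lv⟫| ≤ 3 * α * K ^ (m + 2 + 3) / ‖kv‖} ⊆ ⇑b.repr ⁻¹' T := by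
    rintro w ⟨hw1, hw2, hw3⟩
    intro i
    rw [mem_Icc, ← abs_le]
    have hrepr : b.repr w i = ⟪b i, w⟫ := b.repr_apply_apply w i
    by_cases hi0 : i = 0
    · subst hi0
      rw [hrepr, hb0, real_inner_smul_left, hc0v]
      rw [abs_mul, abs_inv, abs_norm, real_inner_comm]
      have h1 : |⟪w, kv⟫| ≤ α := le_trans hw2.le (div_le_self hα.le hC)
      rw [div_eq_inv_mul]
      exact mul_le_mul_of_nonneg_left h1 (by positivity)
    · by_cases hi1 : i = 1
      · subst hi1
        rw [hrepr, hb1, real_inner_smul_left, hc1v]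
        rw [abs_mul, abs_inv, abs_norm, real_inner_comm, ← hadj w]
        have h2 : ‖p‖⁻¹ * |⟪projPerp kv w, lv⟫| ≤ ‖p‖⁻¹ * (3 * α * K ^ (m + 2 + 3) / ‖kv‖) :=
          mul_le_mul_of_nonneg_left hw3 (by positivity)
        refine h2.trans (le_of_eq ?_)
        field_simp
      · have hcM : c i = M := by
          rw [hc]
          simp [hi0, hi1]
        rw [hcM, hrepr]
        calc |⟪b i, w⟫| ≤ ‖b i‖ * ‖w‖ := abs_real_inner_le_norm _ _
          _ = ‖w‖ := by rw [b.orthonormal.1 i, one_mul]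
          _ ≤ M := hw1.le
  -- the product computation
  have hprod : ∏ i : Fin (m + 2), (2 * c i) =
      (2 * (α / ‖kv‖)) * ((2 * (3 * α * K ^ (m + 2 + 3) / (‖kv‖ * ‖p‖))) * (2 * M) ^ m) := by
    have h1mem : (1 : Fin (m + 2)) ∈ Finset.univ.erase (0 : Fin (m + 2)) :=
      Finset.mem_erase.mpr ⟨h01.symm, Finset.mem_univ _⟩
    rw [← Finset.mul_prod_erase Finset.univ _ (Finset.mem_univ (0 : Fin (m + 2))),
      ← Finset.mul_prod_erase _ _ h1mem]
    have hrest : ∀ i ∈ (Finset.univ.erase (0 : Fin (m + 2))).erase 1, 2 * c i = 2 * M := by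
      intro i hi
      rw [Finset.mem_erase, Finset.mem_erase] at hi
      rw [hc]
      simp [hi.1, hi.2.1]
    rw [Finset.prod_congr rfl hrest, Finset.prod_const]
    have hcard2 : ((Finset.univ.erase (0 : Fin (m + 2))).erase 1).card = m := by
      rw [Finset.card_erase_of_mem h1mem, Finset.card_erase_of_mem (Finset.mem_univ _)]
      simp
    rw [hcard2, hc0v, hc1v]
  have hfinal : ∏ i : Fin (m + 2), (2 * c i) ≤
      3 * 2 ^ (m + 2) * M ^ (m + 2 - 2) * α ^ 2 * K ^ (m + 2 + 3) / ‖kv‖ := by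
    rw [hprod]
    have e1 : (2 * (α / ‖kv‖)) * ((2 * (3 * α * K ^ (m + 2 + 3) / (‖kv‖ * ‖p‖))) * (2 * M) ^ m)
        = 12 * (α ^ 2 * K ^ (m + 2 + 3) * 2 ^ m * M ^ m) / (‖kv‖ ^ 2 * ‖p‖) := by
      rw [mul_pow]
      field_simp
      ring
    have e2 : 3 * 2 ^ (m + 2) * M ^ (m + 2 - 2) * α ^ 2 * K ^ (m + 2 + 3) / ‖kv‖
        = 12 * (α ^ 2 * K ^ (m + 2 + 3) * 2 ^ m * M ^ m) / ‖kv‖ := by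
      rw [show m + 2 - 2 = m from by omega, pow_add]
      norm_num
      ring
    rw [e1, e2]
    have hden : ‖kv‖ ≤ ‖kv‖ ^ 2 * ‖p‖ := by nlinarith
    have hnum : (0:ℝ) ≤ 12 * (α ^ 2 * K ^ (m + 2 + 3) * 2 ^ m * M ^ m) := by positivity
    exact div_le_div_of_nonneg_left hnum hkn hden
  -- put everything together
  calc volume {w : EuclideanSpace ℝ (Fin (m + 2)) |
        ‖w‖ < M ∧ |⟪w, kv⟫| < α / C ∧
        |⟪projPerp kv w, lv⟫| ≤ 3 * α * K ^ (m + 2 + 3) / ‖kv‖}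
      ≤ volume (⇑b.repr ⁻¹' T) := measure_mono hsub
    _ = volume T := b.measurePreserving_repr.measure_preimage hTm.nullMeasurableSet
    _ = volume (Set.univ.pi fun i => Icc (-(c i)) (c i)) := by
        rw [hTeq]
        exact (EuclideanSpace.volume_preserving_symm_measurableEquiv_toLp (Fin (m + 2))).measure_preimage
          (MeasurableSet.univ_pi fun i => measurableSet_Icc).nullMeasurableSet
    _ = ∏ i, volume (Icc (-(c i)) (c i)) := volume_pi_pi _
    _ = ∏ i, ENNReal.ofReal (2 * c i) := by
        refine Finset.prod_congr rfl fun i _ => ?_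
        rw [Real.volume_Icc]
        congr 1
        ring
    _ = ENNReal.ofReal (∏ i, (2 * c i)) := by
        rw [ENNReal.ofReal_prod_of_nonneg]
        intro i _
        have := hcnn i
        positivity
    _ ≤ ENNReal.ofReal (3 * 2 ^ (m + 2) * M ^ (m + 2 - 2) * α ^ 2 * K ^ (m + 2 + 3) / ‖kv‖) :=
        ENNReal.ofReal_le_ofReal hfinal
end
end
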